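/- arXiv:2208.04252 — 3 statements merged into one kernel-verified Lean document; each statement's English description precedes it below -/
import Mathlib

section
/- Let m ≥ 1/2, ρ > 0, β > 0, and let L ≥ 1 be a fixed integer. For each N > L, let W_{1,N}, …, W_{N,N} be i.i.d. real random variables, each with the normalized Gamma(m) distribution, and let T_N denote the top-L sum of (W_{1,N}, …, W_{N,N}). Then the expectation E[log₂(1 + ρ β T_N)] divided by log₂(1 + ρ β (L/m) log N) converges to 1 as N → ∞. -/
open MeasureTheory ProbabilityTheory Filter Real
open Set
open scoped ENNReal NNReal

/-- The top-`L` sum of the values `w 0, …, w (N-1)`: the maximum over subsets `S` of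
cardinality `L` of `∑ n ∈ S, w n`, i.e. the sum of the `L` largest values. -/
noncomputable def topSum {N : ℕ} (L : ℕ) (w : Fin N → ℝ) : ℝ :=
  sSup {x : ℝ | ∃ S : Finset (Fin N), S.card = L ∧ x = ∑ n ∈ S, w n}

section TopSum

variable {N L : ℕ} (w : Fin N → ℝ)

lemma powersetCard_nonempty (h : L ≤ N) :
    (Finset.powersetCard L (Finset.univ : Finset (Fin N))).Nonempty := by
  rw [Finset.powersetCard_nonempty]
  simpa using h

lemma topSum_eq_sup' (h : L ≤ N) :
    topSum L w = (Finset.powersetCard L (Finset.univ : Finset (Fin N))).sup'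
      (powersetCard_nonempty h) (fun S => ∑ n ∈ S, w n) := by
  rw [Finset.sup'_eq_csSup_image, topSum]
  congr 1
  ext x
  simp only [Set.mem_setOf_eq, Set.mem_image, Finset.mem_coe, Finset.mem_powersetCard_univ]
  constructor
  · rintro ⟨S, hS, rfl⟩; exact ⟨S, hS, rfl⟩
  · rintro ⟨S, hS, rfl⟩; exact ⟨S, hS, rfl⟩

lemma le_topSum (h : L ≤ N) {S : Finset (Fin N)} (hS : S.card = L) :
    ∑ n ∈ S, w n ≤ topSum L w := by
  rw [topSum_eq_sup' w h]
  exact Finset.le_sup' (fun S => ∑ n ∈ S, w n)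
    (Finset.mem_powersetCard_univ.mpr hS)

lemma topSum_le (h : L ≤ N) {a : ℝ}
    (ha : ∀ S : Finset (Fin N), S.card = L → ∑ n ∈ S, w n ≤ a) :
    topSum L w ≤ a := by
  rw [topSum_eq_sup' w h]
  exact Finset.sup'_le _ _ fun S hS => ha S (by simpa [Finset.mem_powersetCard_univ] using hS)

lemma topSum_nonneg (h : L ≤ N) (hw : ∀ n, 0 ≤ w n) : 0 ≤ topSum L w := by
  obtain ⟨S, hS⟩ := powersetCard_nonempty (N := N) (L := L) h
  rw [Finset.mem_powersetCard_univ] at hS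
  exact le_trans (Finset.sum_nonneg fun n _ => hw n) (le_topSum w h hS)

lemma topSum_le_sum (h : L ≤ N) (hw : ∀ n, 0 ≤ w n) : topSum L w ≤ ∑ n, w n :=
  topSum_le w h fun S _ =>
    Finset.sum_le_sum_of_subset_of_nonneg (Finset.subset_univ S) fun n _ _ => hw n

lemma ge_topSum_of_exists (hL : 1 ≤ L) (h : L ≤ N) (hw : ∀ n, 0 ≤ w n) {t : ℝ}
    (hn : ∃ n, t ≤ w n) : t ≤ topSum L w := by
  obtain ⟨n, hn⟩ := hn
  obtain ⟨S, hSsub, hScard⟩ := Finset.exists_superset_card_eq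
    (s := ({n} : Finset (Fin N))) (by simpa using hL) (by simpa using h)
  refine le_trans ?_ (le_topSum w h hScard)
  calc t ≤ w n := hn
    _ = ∑ i ∈ ({n} : Finset (Fin N)), w i := by simp
    _ ≤ ∑ i ∈ S, w i :=
      Finset.sum_le_sum_of_subset_of_nonneg hSsub fun i _ _ => hw i

lemma topSum_sub_le (hL : 1 ≤ L) (h : L ≤ N) {b : ℝ} :
    max (topSum L w - L * b) 0 ≤ ∑ n, max (w n - b) 0 := by
  refine max_le ?_ (Finset.sum_nonneg fun n _ => le_max_right _ _)
  rw [sub_le_iff_le_add]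
  refine topSum_le w h fun S hS => ?_
  have : ∑ n ∈ S, w n = ∑ n ∈ S, (w n - b) + L * b := by
    rw [Finset.sum_sub_distrib]
    simp [hS, mul_comm]
  rw [this, add_le_add_iff_right]
  calc ∑ n ∈ S, (w n - b) ≤ ∑ n ∈ S, max (w n - b) 0 :=
        Finset.sum_le_sum fun n _ => le_max_left _ _
    _ ≤ ∑ n, max (w n - b) 0 :=
        Finset.sum_le_sum_of_subset_of_nonneg (Finset.subset_univ S)
          fun n _ _ => le_max_right _ _

lemma topSum_measurable {α : Type*} [MeasurableSpace α] (h : L ≤ N) {f : Fin N → α → ℝ}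
    (hf : ∀ n, Measurable (f n)) :
    Measurable (fun ω => topSum L (fun n => f n ω)) := by
  have heq : (fun ω => topSum L (fun n => f n ω)) =
      (Finset.powersetCard L (Finset.univ : Finset (Fin N))).sup'
        (powersetCard_nonempty h) (fun S => fun ω => ∑ n ∈ S, f n ω) := by
    ext ω
    rw [topSum_eq_sup' _ h]
    rw [Finset.sup'_apply]
  rw [heq]
  exact Finset.measurable_sup' _ fun S _ => Finset.measurable_sum _ fun n _ => hf n

end TopSum
section Analytic

/-- Key concavity-type inequality for the upper bound. -/
lemma log_one_add_le {c a x : ℝ} (hc : 0 < c) (ha : 0 ≤ a) (hx : 0 ≤ x) :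
    Real.log (1 + c * x) ≤ Real.log (1 + c * a) + c * max (x - a) 0 := by
  rcases le_or_gt x a with h | h
  · have : Real.log (1 + c * x) ≤ Real.log (1 + c * a) :=
      Real.log_le_log (by positivity) (by nlinarith)
    have h0 : 0 ≤ c * max (x - a) 0 := by positivity
    linarith
  · have hmax : max (x - a) 0 = x - a := max_eq_left (by linarith)
    have hpos : (0:ℝ) < 1 + c * a := by positivity
    have hposx : (0:ℝ) < 1 + c * x := by positivity
    have key : Real.log ((1 + c * x) / (1 + c * a)) ≤ (1 + c * x) / (1 + c * a) - 1 :=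
      Real.log_le_sub_one_of_pos (by positivity)
    have hdiv : (1 + c * x) / (1 + c * a) - 1 ≤ c * (x - a) := by
      rw [div_sub_one hpos.ne', div_le_iff₀ hpos]
      nlinarith [mul_nonneg (mul_nonneg hc.le (sub_nonneg.mpr h.le)) (mul_nonneg hc.le ha)]
    have hlog : Real.log ((1 + c * x) / (1 + c * a)) =
        Real.log (1 + c * x) - Real.log (1 + c * a) :=
      Real.log_div hposx.ne' hpos.ne'
    rw [hmax]
    linarith

lemma logb_one_add_le {c a x : ℝ} (hc : 0 < c) (ha : 0 ≤ a) (hx : 0 ≤ x) :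
    Real.logb 2 (1 + c * x) ≤ Real.logb 2 (1 + c * a) + (Real.log 2)⁻¹ * (c * max (x - a) 0) := by
  have h2 : (0:ℝ) < Real.log 2 := Real.log_pos one_lt_two
  have := log_one_add_le hc ha hx
  rw [Real.logb, Real.logb, div_add' _ _ _ h2.ne']
  rw [div_le_div_iff_of_pos_right h2]
  calc Real.log (1 + c * x) ≤ Real.log (1 + c * a) + c * max (x - a) 0 := this
    _ = Real.log (1 + c * a) + (Real.log 2)⁻¹ * (c * max (x - a) 0) * Real.log 2 := by
        field_simp
    _ = _ := by ring

/-- Integral of decaying exponential on a half line. -/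
lemma integral_exp_neg_mul_Ioi {s b : ℝ} (hs : 0 < s) :
    ∫ x in Ioi b, Real.exp (-(s * x)) = Real.exp (-(s * b)) / s := by
  have := integral_comp_mul_left_Ioi (fun x => Real.exp (-x)) b hs
  simp only [smul_eq_mul] at this
  rw [show (fun x => Real.exp (-(s * x))) = (fun x => Real.exp (-(s * x))) from rfl]
  calc ∫ x in Ioi b, Real.exp (-(s * x)) = s⁻¹ * ∫ x in Ioi (s * b), Real.exp (-x) := this
    _ = Real.exp (-(s * b)) / s := by
        rw [integral_exp_neg_Ioi]; rw [div_eq_inv_mul]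

lemma integrableOn_exp_neg_mul_Ioi {s b : ℝ} (hs : 0 < s) :
    IntegrableOn (fun x => Real.exp (-(s * x))) (Ioi b) := by
  have := exp_neg_integrableOn_Ioi b hs
  simpa [neg_mul] using this

/-- t^k ≤ k! * exp t for t ≥ 0. -/
lemma pow_le_factorial_mul_exp {t : ℝ} (ht : 0 ≤ t) (k : ℕ) :
    t ^ k ≤ (k.factorial : ℝ) * Real.exp t := by
  have h1 : t ^ k / (k.factorial : ℝ) ≤ Real.exp t := by
    calc t ^ k / (k.factorial : ℝ)
        ≤ ∑ i ∈ Finset.range (k+1), t ^ i / (i.factorial : ℝ) := by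
          refine Finset.single_le_sum (f := fun i => t ^ i / (i.factorial : ℝ))
            (fun i _ => by positivity) (Finset.self_mem_range_succ k)
      _ ≤ Real.exp t := Real.sum_le_exp_of_nonneg ht _
  have hk : (0:ℝ) < (k.factorial : ℝ) := by positivity
  rw [div_le_iff₀ hk] at h1
  linarith [h1]

end Analytic

section RatioLimit

/-- Main limit lemma : (log(q₁+p₁x)+C)/log(q₂+p₂x) → 1. -/
lemma tendsto_log_ratio (p₁ p₂ q₁ q₂ C : ℝ) (hp₁ : 0 < p₁) (hp₂ : 0 < p₂) :
    Filter.Tendsto (fun x : ℝ => (Real.log (q₁ + p₁ * x) + C) / Real.log (q₂ + p₂ * x))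
      Filter.atTop (nhds 1) := by
  have key : ∀ p q C', 0 < p → Filter.Tendsto
      (fun x : ℝ => (Real.log (q + p * x) + C') / Real.log x) Filter.atTop (nhds 1) := by
    intro p q C' hp
    have h1 : Filter.Tendsto (fun x : ℝ => q / x + p) Filter.atTop (nhds p) := by
      simpa using (tendsto_const_nhds.div_atTop (tendsto_id (α := ℝ))).add
        (tendsto_const_nhds (x := p))
    have h2 : Filter.Tendsto (fun x : ℝ => Real.log (q / x + p) + C') Filter.atTop
        (nhds (Real.log p + C')) :=
      ((Real.continuousAt_log hp.ne').tendsto.comp h1).add tendsto_const_nhds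
    have h3 : Filter.Tendsto (fun x : ℝ => (Real.log (q / x + p) + C') / Real.log x)
        Filter.atTop (nhds 0) := h2.div_atTop Real.tendsto_log_atTop
    have h4 : Filter.Tendsto (fun x : ℝ => (Real.log (q / x + p) + C') / Real.log x + 1)
        Filter.atTop (nhds 1) := by simpa using h3.add (tendsto_const_nhds (x := (1:ℝ)))
    refine h4.congr' ?_
    filter_upwards [Filter.eventually_gt_atTop 0,
      Filter.eventually_gt_atTop (|q| / p),
      Real.tendsto_log_atTop.eventually_gt_atTop 0] with x hx hx2 hlog
    have hqp : 0 < q / x + p := by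
      have h6 : |q| < p * x := by
        rw [div_lt_iff₀ hp] at hx2; linarith [hx2]
      have h5 : |q / x| < p := by
        rw [abs_div, abs_of_pos hx, div_lt_iff₀ hx]
        linarith [h6]
      have := neg_lt_of_abs_lt h5
      linarith
    have hsplit : Real.log (q + p * x) = Real.log (q / x + p) + Real.log x := by
      rw [← Real.log_mul hqp.ne' (by positivity : x ≠ 0)]
      congr 1
      field_simp
    rw [hsplit]
    field_simp
    ring
  have hA := key p₁ q₁ C hp₁
  have hB := key p₂ q₂ 0 hp₂
  simp only [add_zero] at hB
  have hBinv : Filter.Tendsto (fun x : ℝ => Real.log x / Real.log (q₂ + p₂ * x))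
      Filter.atTop (nhds 1) := by
    have := (hB.inv₀ one_ne_zero)
    simpa [inv_div] using this
  have := hA.mul hBinv
  rw [mul_one] at this
  refine this.congr' ?_
  filter_upwards [Real.tendsto_log_atTop.eventually_gt_atTop 0] with x hlog
  rw [div_mul_div_comm, mul_comm (Real.log (q₁ + p₁ * x) + C) (Real.log x),
    mul_div_mul_left _ _ hlog.ne']

end RatioLimit

/-- `logb` version, composed with `log N`. -/
lemma tendsto_logb_ratio_nat (p₁ p₂ q₁ q₂ C : ℝ) (hp₁ : 0 < p₁) (hp₂ : 0 < p₂) :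
    Filter.Tendsto (fun N : ℕ =>
      (Real.logb 2 (q₁ + p₁ * Real.log N) + C) / Real.logb 2 (q₂ + p₂ * Real.log N))
      Filter.atTop (nhds 1) := by
  have h := (tendsto_log_ratio p₁ p₂ q₁ q₂ (C * Real.log 2) hp₁ hp₂).comp
    (Real.tendsto_log_atTop.comp tendsto_natCast_atTop_atTop)
  refine h.congr fun N => ?_
  have h2 : Real.log 2 ≠ 0 := (Real.log_pos one_lt_two).ne'
  simp only [Function.comp_apply, Real.logb]
  rw [div_add' _ _ _ h2, div_div_div_cancel_right₀ h2]

section Gamma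

variable {m : ℝ} (hm0 : 0 < m)

lemma gammaPDFReal_of_neg' {x : ℝ} (hx : x < 0) : gammaPDFReal m m x = 0 := by
  simp [gammaPDFReal, not_le.mpr hx]

include hm0 in
/-- Pointwise bound `x * pdf x ≤ M exp(-(m/2) x)` for `x ≥ 0`. -/
lemma gamma_pdf_bound :
    ∃ M : ℝ, 0 < M ∧ ∀ x : ℝ, 0 ≤ x →
      x * gammaPDFReal m m x ≤ M * Real.exp (-(m / 2 * x)) := by
  set k := ⌈m⌉₊ with hk
  have hmk : m ≤ (k : ℝ) := Nat.le_ceil m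
  have hG : 0 < Real.Gamma m := Real.Gamma_pos_of_pos hm0
  set C1 : ℝ := m ^ m / Real.Gamma m with hC1
  have hC1pos : 0 < C1 := by
    rw [hC1]; positivity
  set K2 : ℝ := (k.factorial : ℝ) * (2 / m) ^ k with hK2
  have hK2pos : 0 < K2 := by rw [hK2]; positivity
  refine ⟨C1 * (1 + K2), by positivity, fun x hx => ?_⟩
  rcases eq_or_lt_of_le hx with rfl | hxpos
  · simp only [zero_mul]
    positivity
  have hpdf : gammaPDFReal m m x = C1 * x ^ (m - 1) * Real.exp (-(m * x)) := by
    rw [gammaPDFReal, if_pos hx, hC1]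
  have hxm : x * gammaPDFReal m m x = C1 * x ^ m * Real.exp (-(m * x)) := by
    rw [hpdf]
    have : x * x ^ (m - 1) = x ^ m := by
      rw [mul_comm, ← Real.rpow_add_one hxpos.ne' (m - 1), sub_add_cancel]
    ring_nf
    rw [← this]
    ring
  rw [hxm]
  rcases le_or_gt x 1 with hx1 | hx1
  · have h1 : x ^ m ≤ 1 := Real.rpow_le_one hx hx1 hm0.le
    have h2 : Real.exp (-(m * x)) ≤ Real.exp (-(m / 2 * x)) := by
      apply Real.exp_le_exp.mpr
      nlinarith
    calc C1 * x ^ m * Real.exp (-(m * x)) ≤ C1 * 1 * Real.exp (-(m / 2 * x)) := by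
          apply mul_le_mul _ h2 (Real.exp_pos _).le (by positivity)
          nlinarith [Real.rpow_nonneg hx m]
      _ ≤ C1 * (1 + K2) * Real.exp (-(m / 2 * x)) := by
          have h3 := (Real.exp_pos (-(m / 2 * x))).le
          nlinarith [mul_nonneg (mul_nonneg hC1pos.le hK2pos.le) h3]
  · -- 1 < x
    have hxk : x ^ m ≤ x ^ (k : ℝ) := Real.rpow_le_rpow_of_exponent_le hx1.le hmk
    have hxk' : x ^ (k : ℝ) = x ^ k := Real.rpow_natCast x k
    have hpow : x ^ k ≤ K2 * Real.exp (m / 2 * x) := by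
      have ht : 0 ≤ m / 2 * x := by positivity
      have h := pow_le_factorial_mul_exp ht k
      have hxe : x ^ k = (2 / m) ^ k * (m / 2 * x) ^ k := by
        rw [← mul_pow]
        congr 1
        field_simp
      rw [hxe, hK2]
      calc (2 / m) ^ k * (m / 2 * x) ^ k
          ≤ (2 / m) ^ k * ((k.factorial : ℝ) * Real.exp (m / 2 * x)) := by
            apply mul_le_mul_of_nonneg_left h (by positivity)
        _ = (k.factorial : ℝ) * (2 / m) ^ k * Real.exp (m / 2 * x) := by ring
    have hexp : Real.exp (m / 2 * x) * Real.exp (-(m * x)) = Real.exp (-(m / 2 * x)) := by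
      rw [← Real.exp_add]
      congr 1
      ring
    calc C1 * x ^ m * Real.exp (-(m * x))
        ≤ C1 * (K2 * Real.exp (m / 2 * x)) * Real.exp (-(m * x)) := by
          apply mul_le_mul_of_nonneg_right _ (Real.exp_pos _).le
          apply mul_le_mul_of_nonneg_left _ hC1pos.le
          calc x ^ m ≤ x ^ (k:ℝ) := hxk
            _ = x ^ k := hxk'
            _ ≤ K2 * Real.exp (m / 2 * x) := hpow
      _ = C1 * K2 * (Real.exp (m / 2 * x) * Real.exp (-(m * x))) := by ring
      _ = C1 * K2 * Real.exp (-(m / 2 * x)) := by rw [hexp]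
      _ ≤ C1 * (1 + K2) * Real.exp (-(m / 2 * x)) := by
          have h3 := (Real.exp_pos (-(m / 2 * x))).le
          nlinarith [mul_nonneg hC1pos.le h3]

lemma gammaMeasure_eq_withDensity :
    gammaMeasure m m = volume.withDensity (fun x => ((gammaPDFReal m m x).toNNReal : ℝ≥0∞)) := by
  rfl

include hm0 in
lemma integral_gammaMeasure_eq (g : ℝ → ℝ) :
    ∫ x, g x ∂(gammaMeasure m m) = ∫ x, g x * gammaPDFReal m m x := by
  rw [gammaMeasure_eq_withDensity,
    integral_withDensity_eq_integral_smul (measurable_gammaPDFReal m m).real_toNNReal g]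
  refine integral_congr_ae (Filter.Eventually.of_forall fun x => ?_)
  simp only [NNReal.smul_def, Real.coe_toNNReal _ (gammaPDFReal_nonneg hm0 hm0 x), smul_eq_mul, mul_comm]

end Gamma

section Gamma2

variable {m : ℝ} (hm0 : 0 < m)

include hm0 in
lemma indicator_exp_integrable (M b : ℝ) :
    Integrable ((Ioi (b:ℝ)).indicator (fun x => M * Real.exp (-(m / 2 * x)))) := by
  rw [integrable_indicator_iff measurableSet_Ioi]
  exact (integrableOn_exp_neg_mul_Ioi (by linarith : (0:ℝ) < m / 2)).const_mul M

include hm0 in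
lemma integrable_gamma_aux {g : ℝ → ℝ} (hg : Measurable g) (M b : ℝ)
    (hbound : ∀ x, |g x * gammaPDFReal m m x| ≤
      (Ioi (b:ℝ)).indicator (fun x => M * Real.exp (-(m / 2 * x))) x) :
    Integrable g (gammaMeasure m m) := by
  rw [gammaMeasure_eq_withDensity,
    integrable_withDensity_iff_integrable_smul (measurable_gammaPDFReal m m).real_toNNReal]
  have heq : (fun x => ((gammaPDFReal m m x).toNNReal : ℝ≥0) • g x) =
      fun x => g x * gammaPDFReal m m x := by
    funext x
    simp only [NNReal.smul_def, Real.coe_toNNReal _ (gammaPDFReal_nonneg hm0 hm0 x),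
      smul_eq_mul, mul_comm]
  rw [heq]
  refine (indicator_exp_integrable hm0 M b).mono'
    ((hg.mul (measurable_gammaPDFReal m m)).aestronglyMeasurable)
    (Filter.Eventually.of_forall fun x => ?_)
  rw [Real.norm_eq_abs]
  exact hbound x

include hm0 in
lemma gamma_moment_bounds :
    Integrable (fun x : ℝ => x) (gammaMeasure m m) ∧
    ∃ K : ℝ, 0 < K ∧ ∀ b : ℝ, 0 ≤ b →
      Integrable (fun x => max (x - b) 0) (gammaMeasure m m) ∧
      ∫ x, max (x - b) 0 ∂(gammaMeasure m m) ≤ K * Real.exp (-(m / 2 * b)) := by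
  obtain ⟨M, hMpos, hM⟩ := gamma_pdf_bound hm0
  have hxpdf : ∀ x : ℝ, 0 ≤ x * gammaPDFReal m m x := fun x => by
    rcases le_or_gt 0 x with h | h
    · exact mul_nonneg h (gammaPDFReal_nonneg hm0 hm0 x)
    · rw [gammaPDFReal_of_neg' h, mul_zero]
  have hkey : ∀ b : ℝ, 0 ≤ b → ∀ x : ℝ, |max (x - b) 0 * gammaPDFReal m m x| ≤
      (Ioi (b:ℝ)).indicator (fun x => M * Real.exp (-(m / 2 * x))) x := by
    intro b hb x
    rcases le_or_gt x b with h | h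
    · rw [max_eq_right (by linarith), zero_mul, abs_zero]
      exact Set.indicator_nonneg (fun y _ => by positivity) x
    · rw [Set.indicator_of_mem (Set.mem_Ioi.mpr h)]
      have hx0 : 0 ≤ x := le_trans hb h.le
      rw [max_eq_left (by linarith), abs_of_nonneg
        (mul_nonneg (by linarith) (gammaPDFReal_nonneg hm0 hm0 x))]
      calc (x - b) * gammaPDFReal m m x ≤ x * gammaPDFReal m m x := by
            apply mul_le_mul_of_nonneg_right (by linarith) (gammaPDFReal_nonneg hm0 hm0 x)
        _ ≤ M * Real.exp (-(m / 2 * x)) := hM x hx0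
  constructor
  · refine integrable_gamma_aux hm0 measurable_id M 0 fun x => ?_
    rcases le_or_gt x 0 with h | h
    · rcases lt_or_eq_of_le h with h' | h'
      · rw [gammaPDFReal_of_neg' h', mul_zero, abs_zero]
        exact Set.indicator_nonneg (fun y _ => by positivity) x
      · subst h'
        simp only [id_eq, zero_mul, abs_zero]
        exact Set.indicator_nonneg (fun y _ => by positivity) 0
    · rw [Set.indicator_of_mem (Set.mem_Ioi.mpr h), abs_of_nonneg (hxpdf x)]
      exact hM x h.le
  · refine ⟨M * (2 / m), by positivity, fun b hb => ?_⟩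
    have hint : Integrable (fun x => max (x - b) 0) (gammaMeasure m m) :=
      integrable_gamma_aux hm0 ((measurable_id.sub_const b).max measurable_const) M b (hkey b hb)
    refine ⟨hint, ?_⟩
    rw [integral_gammaMeasure_eq hm0]
    have hle : ∫ x, max (x - b) 0 * gammaPDFReal m m x ≤
        ∫ x, (Ioi (b:ℝ)).indicator (fun x => M * Real.exp (-(m / 2 * x))) x := by
      refine integral_mono_of_nonneg (Filter.Eventually.of_forall fun x =>
        mul_nonneg (le_max_right _ _) (gammaPDFReal_nonneg hm0 hm0 x))
        (indicator_exp_integrable hm0 M b)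
        (Filter.Eventually.of_forall fun x => ?_)
      have := hkey b hb x
      calc max (x - b) 0 * gammaPDFReal m m x
          = |max (x - b) 0 * gammaPDFReal m m x| := (abs_of_nonneg
            (mul_nonneg (le_max_right _ _) (gammaPDFReal_nonneg hm0 hm0 x))).symm
        _ ≤ _ := this
    refine le_trans hle ?_
    rw [integral_indicator measurableSet_Ioi, MeasureTheory.integral_const_mul,
      integral_exp_neg_mul_Ioi (by linarith : (0:ℝ) < m / 2)]
    rw [div_div_eq_mul_div, mul_comm M]
    ring_nf
    exact le_refl _

include hm0 in
lemma gamma_tail_lower {t : ℝ} (ht : 1 ≤ t) :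
    ENNReal.ofReal (m ^ m / Real.Gamma m * Real.exp (-((m + 1) * (t + 1)))) ≤
      gammaMeasure m m (Ici t) := by
  set C1 : ℝ := m ^ m / Real.Gamma m with hC1
  have hC1pos : 0 < C1 := by
    have := Real.Gamma_pos_of_pos hm0
    rw [hC1]; positivity
  have hpt : ∀ x ∈ Icc t (t + 1),
      ENNReal.ofReal (C1 * Real.exp (-((m + 1) * (t + 1)))) ≤ gammaPDF m m x := by
    rintro x ⟨hx1, hx2⟩
    have hx0 : (1:ℝ) ≤ x := le_trans ht hx1
    rw [gammaPDF_of_nonneg (by linarith)]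
    apply ENNReal.ofReal_le_ofReal
    have h1 : Real.exp (-(t + 1)) ≤ x ^ (m - 1) := by
      calc Real.exp (-(t + 1)) = (Real.exp (t + 1))⁻¹ := Real.exp_neg _
        _ ≤ (t + 1)⁻¹ := by
            apply inv_anti₀ (by linarith)
            linarith [Real.add_one_le_exp (t + 1)]
        _ ≤ x⁻¹ := inv_anti₀ (by linarith) hx2
        _ = x ^ (-1 : ℝ) := (Real.rpow_neg_one x).symm
        _ ≤ x ^ (m - 1) := Real.rpow_le_rpow_of_exponent_le hx0 (by linarith)
    have h2 : Real.exp (-(m * (t + 1))) ≤ Real.exp (-(m * x)) := by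
      apply Real.exp_le_exp.mpr
      nlinarith
    calc C1 * Real.exp (-((m + 1) * (t + 1)))
        = C1 * (Real.exp (-(t + 1)) * Real.exp (-(m * (t + 1)))) := by
          rw [← Real.exp_add]; congr 2; ring
      _ ≤ C1 * (x ^ (m - 1) * Real.exp (-(m * x))) := by
          apply mul_le_mul_of_nonneg_left _ hC1pos.le
          apply mul_le_mul h1 h2 (Real.exp_pos _).le (Real.rpow_nonneg (by linarith) _)
      _ = C1 * x ^ (m - 1) * Real.exp (-(m * x)) := by ring
  calc ENNReal.ofReal (C1 * Real.exp (-((m + 1) * (t + 1))))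
      = ∫⁻ _ in Icc t (t + 1), ENNReal.ofReal (C1 * Real.exp (-((m + 1) * (t + 1)))) := by
        rw [setLIntegral_const, Real.volume_Icc]
        norm_num
    _ ≤ ∫⁻ x in Icc t (t + 1), gammaPDF m m x := setLIntegral_mono
        ((measurable_gammaPDFReal m m).ennreal_ofReal) hpt
    _ ≤ ∫⁻ x in Ici t, gammaPDF m m x := lintegral_mono_set Icc_subset_Ici_self
    _ = gammaMeasure m m (Ici t) := (withDensity_apply _ measurableSet_Ici).symm

lemma gamma_Iio_zero : gammaMeasure m m (Iio 0) = 0 := by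
  rw [gammaMeasure, withDensity_apply _ measurableSet_Iio]
  exact lintegral_gammaPDF_of_nonpos le_rfl

end Gamma2

set_option maxHeartbeats 1000000

theorem stmt0
    (m ρ β : ℝ) (hm : 1 / 2 ≤ m) (hρ : 0 < ρ) (hβ : 0 < β)
    (L : ℕ) (hL : 1 ≤ L)
    (Ω : ℕ → Type) [∀ N, MeasurableSpace (Ω N)]
    (P : ∀ N, Measure (Ω N)) [∀ N, IsProbabilityMeasure (P N)]
    (W : ∀ N : ℕ, Fin N → Ω N → ℝ)
    (hmeas : ∀ N : ℕ, L < N → ∀ n : Fin N, Measurable (W N n))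
    (hindep : ∀ N : ℕ, L < N →
      iIndepFun (W N) (P N))
    (hdist : ∀ N : ℕ, L < N → ∀ n : Fin N,
      (P N).map (W N n) = gammaMeasure m m) :
    Tendsto
      (fun N : ℕ =>
        (∫ ω, Real.logb 2 (1 + ρ * β * topSum L (fun n => W N n ω)) ∂(P N)) /
          Real.logb 2 (1 + ρ * β * ((L : ℝ) / m) * Real.log N))
      atTop (nhds 1) := by
  have hm0 : 0 < m := by linarith
  set c := ρ * β with hc_def
  have hc : 0 < c := mul_pos hρ hβ
  have hL1 : (1:ℝ) ≤ (L:ℝ) := by exact_mod_cast hL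
  have hprob : IsProbabilityMeasure (gammaMeasure m m) := isProbabilityMeasure_gammaMeasure hm0 hm0
  obtain ⟨hint_id, K, hKpos, hK⟩ := gamma_moment_bounds hm0
  set C1 : ℝ := m ^ m / Real.Gamma m with hC1
  have hC1pos : 0 < C1 := by
    have := Real.Gamma_pos_of_pos hm0
    rw [hC1]; positivity
  set t : ℕ → ℝ := fun N => 1 + Real.log N / (2 * (m + 1)) with ht_def
  set b : ℕ → ℝ := fun N => 1 + 2 / m * Real.log N with hb_def
  set C4 : ℝ := (Real.log 2)⁻¹ * c * (K * Real.exp (-(m / 2))) with hC4_def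
  set p : ℕ → ℝ := fun N => C1 * Real.exp (-((m + 1) * (t N + 1))) with hp_def
  set D : ℕ → ℝ := fun N => Real.logb 2 (1 + c * ((L : ℝ) / m) * Real.log N) with hD_def
  set I : ℕ → ℝ :=
    fun N => ∫ ω, Real.logb 2 (1 + c * topSum L (fun n => W N n ω)) ∂(P N) with hI_def
  -- basic per-N facts
  have hlogN : ∀ N : ℕ, L < N → 0 ≤ Real.log N := by
    intro N hN
    apply Real.log_nonneg
    have : 1 ≤ N := le_trans hL (le_of_lt hN)
    exact_mod_cast this
  have hae : ∀ N, L < N → ∀ᵐ ω ∂(P N), ∀ n : Fin N, 0 ≤ W N n ω := by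
    intro N hN
    rw [MeasureTheory.ae_all_iff]
    intro n
    have h0 : P N (W N n ⁻¹' Set.Iio 0) = 0 := by
      rw [← Measure.map_apply (hmeas N hN n) measurableSet_Iio, hdist N hN n]
      exact gamma_Iio_zero
    rw [ae_iff]
    convert h0 using 2
    ext ω
    simp [not_le]
  have hWint : ∀ N, L < N → ∀ n : Fin N, Integrable (W N n) (P N) := by
    intro N hN n
    have h1 : Integrable (fun x : ℝ => x) ((P N).map (W N n)) := by
      rw [hdist N hN n]; exact hint_id
    rw [show (fun x : ℝ => x) = id from rfl,
      integrable_map_measure aestronglyMeasurable_id ((hmeas N hN n).aemeasurable)] at h1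
    simpa [Function.id_comp] using h1
  have hTmeas : ∀ N, L < N → Measurable (fun ω => topSum L (fun n => W N n ω)) :=
    fun N hN => topSum_measurable (le_of_lt hN) (fun n => hmeas N hN n)
  have hLogMeas : ∀ N, L < N →
      Measurable (fun ω => Real.logb 2 (1 + c * topSum L (fun n => W N n ω))) := by
    intro N hN
    exact (Real.measurable_log.comp (((hTmeas N hN).const_mul c).const_add 1)).div_const
      (Real.log 2)
  have hIint : ∀ N, L < N →
      Integrable (fun ω => Real.logb 2 (1 + c * topSum L (fun n => W N n ω))) (P N) := by
    intro N hN
    refine Integrable.mono'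
      (g := fun ω => (Real.log 2)⁻¹ * (c * ∑ n, W N n ω)) ?_ ?_ ?_
    · exact (((integrable_finset_sum Finset.univ
        (fun n _ => hWint N hN n)).const_mul c).const_mul ((Real.log 2)⁻¹))
    · exact (hLogMeas N hN).aestronglyMeasurable
    · filter_upwards [hae N hN] with ω hω
      set T := topSum L (fun n => W N n ω) with hT
      have hT0 : 0 ≤ T := topSum_nonneg _ (le_of_lt hN) hω
      have hTsum : T ≤ ∑ n, W N n ω := topSum_le_sum _ (le_of_lt hN) hω
      have h1T : (1:ℝ) ≤ 1 + c * T := by nlinarith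
      rw [Real.norm_eq_abs, abs_of_nonneg (Real.logb_nonneg one_lt_two h1T)]
      have hlog : Real.log (1 + c * T) ≤ c * T := by
        have := Real.log_le_sub_one_of_pos (by linarith : (0:ℝ) < 1 + c * T)
        linarith
      have h2 : (0:ℝ) < Real.log 2 := Real.log_pos one_lt_two
      rw [Real.logb, div_eq_inv_mul]
      have hcT : c * T ≤ c * ∑ n, W N n ω := by
        apply mul_le_mul_of_nonneg_left hTsum hc.le
      calc (Real.log 2)⁻¹ * Real.log (1 + c * T)
          ≤ (Real.log 2)⁻¹ * (c * T) := by
            apply mul_le_mul_of_nonneg_left hlog (by positivity)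
        _ ≤ (Real.log 2)⁻¹ * (c * ∑ n, W N n ω) := by
            apply mul_le_mul_of_nonneg_left hcT (by positivity)
  -- upper bound
  have upper : ∀ N : ℕ, L < N → I N ≤ Real.logb 2 (1 + c * ((L:ℝ) * b N)) + C4 := by
    intro N hN
    have hNpos : (0:ℝ) < N := by
      have : 0 < N := lt_of_le_of_lt (Nat.zero_le L) hN
      exact_mod_cast this
    have hbN : (0:ℝ) ≤ b N := by
      have := hlogN N hN
      simp only [hb_def]
      positivity
    obtain ⟨hmax_int, hmax_bound⟩ := hK (b N) hbN
    have hgmeas : Measurable (fun x : ℝ => max (x - b N) 0) :=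
      (measurable_id.sub_const (b N)).max measurable_const
    have hmaxWint : ∀ n : Fin N, Integrable (fun ω => max (W N n ω - b N) 0) (P N) := by
      intro n
      have h1 : Integrable (fun x : ℝ => max (x - b N) 0) ((P N).map (W N n)) := by
        rw [hdist N hN n]; exact hmax_int
      rw [integrable_map_measure hgmeas.aestronglyMeasurable
        ((hmeas N hN n).aemeasurable)] at h1
      exact h1
    have hmaxWval : ∀ n : Fin N, ∫ ω, max (W N n ω - b N) 0 ∂(P N) =
        ∫ x, max (x - b N) 0 ∂(gammaMeasure m m) := by
      intro n
      rw [← hdist N hN n,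
        integral_map ((hmeas N hN n).aemeasurable) hgmeas.aestronglyMeasurable]
    have step1 : I N ≤ ∫ ω, (Real.logb 2 (1 + c * ((L:ℝ) * b N)) +
        (Real.log 2)⁻¹ * (c * ∑ n, max (W N n ω - b N) 0)) ∂(P N) := by
      refine integral_mono_ae (hIint N hN) ?_ ?_
      · exact (integrable_const _).add
          (((integrable_finset_sum Finset.univ
            (fun n _ => hmaxWint n)).const_mul c).const_mul ((Real.log 2)⁻¹))
      · filter_upwards [hae N hN] with ω hω
        set T := topSum L (fun n => W N n ω) with hT
        have hT0 : 0 ≤ T := topSum_nonneg _ (le_of_lt hN) hω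
        have haN : (0:ℝ) ≤ (L:ℝ) * b N := by positivity
        have key := logb_one_add_le (a := (L:ℝ) * b N) (x := T) hc haN hT0
        have hmaxle : max (T - (L:ℝ) * b N) 0 ≤ ∑ n, max (W N n ω - b N) 0 :=
          topSum_sub_le _ hL (le_of_lt hN)
        calc Real.logb 2 (1 + c * T)
            ≤ Real.logb 2 (1 + c * ((L:ℝ) * b N)) +
              (Real.log 2)⁻¹ * (c * max (T - (L:ℝ) * b N) 0) := key
          _ ≤ Real.logb 2 (1 + c * ((L:ℝ) * b N)) +
              (Real.log 2)⁻¹ * (c * ∑ n, max (W N n ω - b N) 0) := by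
              have h2 : (0:ℝ) < Real.log 2 := Real.log_pos one_lt_two
              have : c * max (T - (L:ℝ) * b N) 0 ≤ c * ∑ n, max (W N n ω - b N) 0 :=
                mul_le_mul_of_nonneg_left hmaxle hc.le
              have := mul_le_mul_of_nonneg_left this (by positivity : (0:ℝ) ≤ (Real.log 2)⁻¹)
              linarith
    have step2 : ∫ ω, (Real.logb 2 (1 + c * ((L:ℝ) * b N)) +
        (Real.log 2)⁻¹ * (c * ∑ n, max (W N n ω - b N) 0)) ∂(P N) =
        Real.logb 2 (1 + c * ((L:ℝ) * b N)) +
        (Real.log 2)⁻¹ * (c * (N * ∫ x, max (x - b N) 0 ∂(gammaMeasure m m))) := by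
      rw [integral_add (integrable_const _)
        (((integrable_finset_sum Finset.univ
          (fun n _ => hmaxWint n)).const_mul c).const_mul ((Real.log 2)⁻¹))]
      congr 1
      · simp
      · rw [MeasureTheory.integral_const_mul, MeasureTheory.integral_const_mul,
          integral_finset_sum Finset.univ (fun n _ => hmaxWint n)]
        congr 2
        have : ∀ n ∈ Finset.univ, ∫ ω, max (W N n ω - b N) 0 ∂(P N) =
            ∫ x, max (x - b N) 0 ∂(gammaMeasure m m) := fun n _ => hmaxWval n
        rw [Finset.sum_congr rfl this, Finset.sum_const]
        simp [mul_comm]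
    have step3 : (Real.log 2)⁻¹ * (c * (N * ∫ x, max (x - b N) 0 ∂(gammaMeasure m m))) ≤ C4 := by
      have hval : ∫ x, max (x - b N) 0 ∂(gammaMeasure m m) ≤
          K * Real.exp (-(m / 2 * b N)) := hmax_bound
      have hexp : Real.exp (-(m / 2 * b N)) = Real.exp (-(m / 2)) * (N:ℝ)⁻¹ := by
        simp only [hb_def]
        rw [show -(m / 2 * (1 + 2 / m * Real.log N)) =
          -(m / 2) + -Real.log N by field_simp; ring]
        rw [Real.exp_add]
        congr 1
        rw [Real.exp_neg, Real.exp_log hNpos]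
      have hNval : (N:ℝ) * ∫ x, max (x - b N) 0 ∂(gammaMeasure m m) ≤
          K * Real.exp (-(m / 2)) := by
        calc (N:ℝ) * ∫ x, max (x - b N) 0 ∂(gammaMeasure m m)
            ≤ (N:ℝ) * (K * Real.exp (-(m / 2 * b N))) :=
              mul_le_mul_of_nonneg_left hval hNpos.le
          _ = K * Real.exp (-(m / 2)) := by
              rw [hexp]
              field_simp
      rw [hC4_def]
      have h2 : (0:ℝ) ≤ (Real.log 2)⁻¹ := by
        have := Real.log_pos one_lt_two
        positivity
      calc (Real.log 2)⁻¹ * (c * ((N:ℝ) * ∫ x, max (x - b N) 0 ∂(gammaMeasure m m)))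
          ≤ (Real.log 2)⁻¹ * (c * (K * Real.exp (-(m / 2)))) := by
            apply mul_le_mul_of_nonneg_left _ h2
            exact mul_le_mul_of_nonneg_left hNval hc.le
        _ = (Real.log 2)⁻¹ * c * (K * Real.exp (-(m / 2))) := by ring
    calc I N ≤ _ := step1
      _ = _ := step2
      _ ≤ Real.logb 2 (1 + c * ((L:ℝ) * b N)) + C4 := by linarith [step3]
  -- lower bound
  have lower : ∀ N : ℕ, L < N →
      (1 - Real.exp (-((N:ℝ) * p N))) * Real.logb 2 (1 + c * t N) ≤ I N := by
    intro N hN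
    have htN1 : (1:ℝ) ≤ t N := by
      have := hlogN N hN
      simp only [ht_def]
      have : 0 ≤ Real.log N / (2 * (m + 1)) := by positivity
      linarith
    have htN0 : (0:ℝ) ≤ t N := by linarith
    -- the bad event
    set B : Set (Ω N) := ⋂ n : Fin N, W N n ⁻¹' Set.Iio (t N) with hB_def
    have hBmeas : MeasurableSet B :=
      MeasurableSet.iInter fun n => (hmeas N hN n) measurableSet_Iio
    have hPB : P N B = (gammaMeasure m m (Set.Iio (t N))) ^ N := by
      have hindep' := (iIndepFun_iff_measure_inter_preimage_eq_mul.mp (hindep N hN))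
        Finset.univ (sets := fun _ : Fin N => Set.Iio (t N)) (fun i _ => measurableSet_Iio)
      have hBuniv : (⋂ i ∈ (Finset.univ : Finset (Fin N)), W N i ⁻¹' Set.Iio (t N)) = B := by
        simp [hB_def]
      rw [hBuniv] at hindep'
      rw [hindep']
      have hfac : ∀ i : Fin N, P N (W N i ⁻¹' Set.Iio (t N)) =
          gammaMeasure m m (Set.Iio (t N)) := by
        intro i
        rw [← Measure.map_apply (hmeas N hN i) measurableSet_Iio, hdist N hN i]
      rw [Finset.prod_congr rfl (fun i _ => hfac i), Finset.prod_const]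
      simp
    have hval : (gammaMeasure m m (Set.Iio (t N))).toReal ≤ 1 - p N := by
      have tail := gamma_tail_lower hm0 htN1
      have hsum : gammaMeasure m m (Set.Ici (t N)) + gammaMeasure m m (Set.Iio (t N)) = 1 := by
        have := prob_add_prob_compl (μ := gammaMeasure m m) (s := Set.Ici (t N))
          measurableSet_Ici
        rwa [compl_Ici] at this
      have hfin1 : gammaMeasure m m (Set.Ici (t N)) ≠ ⊤ := measure_ne_top _ _
      have hfin2 : gammaMeasure m m (Set.Iio (t N)) ≠ ⊤ := measure_ne_top _ _
      have hsum' : (gammaMeasure m m (Set.Ici (t N))).toReal +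
          (gammaMeasure m m (Set.Iio (t N))).toReal = 1 := by
        rw [← ENNReal.toReal_add hfin1 hfin2, hsum]
        simp
      have hp_le : p N ≤ (gammaMeasure m m (Set.Ici (t N))).toReal := by
        have := ENNReal.toReal_mono hfin1 tail
        rwa [ENNReal.toReal_ofReal (by positivity)] at this
      rw [hp_def] at hp_le ⊢
      linarith
    have hp0 : 0 ≤ p N := by rw [hp_def]; positivity
    have hval0 : 0 ≤ (gammaMeasure m m (Set.Iio (t N))).toReal := ENNReal.toReal_nonneg
    have hPBle : (P N B).toReal ≤ Real.exp (-((N:ℝ) * p N)) := by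
      rw [hPB, ENNReal.toReal_pow]
      calc (gammaMeasure m m (Set.Iio (t N))).toReal ^ N
          ≤ (1 - p N) ^ N := pow_le_pow_left₀ hval0 hval N
        _ ≤ Real.exp (-(p N)) ^ N := by
            apply pow_le_pow_left₀ (by linarith) (Real.one_sub_le_exp_neg (p N)) N
        _ = Real.exp (-((N:ℝ) * p N)) := by
            rw [← Real.exp_nat_mul]
            congr 1
            ring
    -- the good event
    set A : Set (Ω N) := (⋃ n : Fin N, W N n ⁻¹' Set.Iio 0)ᶜ with hA_def
    have hAmeas : MeasurableSet A :=
      (MeasurableSet.iUnion fun n => (hmeas N hN n) measurableSet_Iio).compl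
    have hPAc : P N Aᶜ = 0 := by
      rw [hA_def, compl_compl]
      apply measure_iUnion_null
      intro n
      rw [← Measure.map_apply (hmeas N hN n) measurableSet_Iio, hdist N hN n]
      exact gamma_Iio_zero
    set E : Set (Ω N) := A ∩ Bᶜ with hE_def
    have hEmeas : MeasurableSet E := hAmeas.inter hBmeas.compl
    have hPE : 1 - Real.exp (-((N:ℝ) * p N)) ≤ (P N E).toReal := by
      have hEc : P N Eᶜ ≤ P N B := by
        rw [hE_def, Set.compl_inter, compl_compl B]
        calc P N (Aᶜ ∪ B) ≤ P N Aᶜ + P N B := measure_union_le _ _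
          _ = P N B := by rw [hPAc, zero_add]
      have h1 : (P N E).toReal = 1 - (P N Eᶜ).toReal := by
        have := prob_compl_eq_one_sub (μ := P N) hEmeas.compl
        rw [compl_compl] at this
        rw [this, ENNReal.toReal_sub_of_le (prob_le_one) (by simp)]
        simp
      have h2 : (P N Eᶜ).toReal ≤ Real.exp (-((N:ℝ) * p N)) :=
        le_trans (ENNReal.toReal_mono (measure_ne_top _ _) hEc) hPBle
      linarith
    -- integral bound
    have hlogb0 : 0 ≤ Real.logb 2 (1 + c * t N) :=
      Real.logb_nonneg one_lt_two (by nlinarith)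
    have hind : ∫ ω, E.indicator (fun _ => Real.logb 2 (1 + c * t N)) ω ∂(P N) ≤ I N := by
      refine integral_mono_ae ((integrable_const _).indicator hEmeas) (hIint N hN) ?_
      filter_upwards [hae N hN] with ω hω
      set T := topSum L (fun n => W N n ω) with hT
      have hT0 : 0 ≤ T := topSum_nonneg _ (le_of_lt hN) hω
      by_cases hωE : ω ∈ E
      · rw [Set.indicator_of_mem hωE]
        have hωB : ω ∉ B := hωE.2
        have hex : ∃ n : Fin N, t N ≤ W N n ω := by
          by_contra hcon
          push_neg at hcon
          exact hωB (Set.mem_iInter.mpr fun n => Set.mem_preimage.mpr (hcon n))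
        have hTt : t N ≤ T := ge_topSum_of_exists _ hL (le_of_lt hN) hω hex
        apply Real.logb_le_logb_of_le one_lt_two (by nlinarith)
        have := mul_le_mul_of_nonneg_left hTt hc.le
        linarith
      · rw [Set.indicator_of_notMem hωE]
        exact Real.logb_nonneg one_lt_two (by nlinarith)
    have hindval : ∫ ω, E.indicator (fun _ => Real.logb 2 (1 + c * t N)) ω ∂(P N) =
        (P N E).toReal * Real.logb 2 (1 + c * t N) := by
      rw [integral_indicator_const _ hEmeas]
      simp [mul_comm, measureReal_def]
    calc (1 - Real.exp (-((N:ℝ) * p N))) * Real.logb 2 (1 + c * t N)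
        ≤ (P N E).toReal * Real.logb 2 (1 + c * t N) :=
          mul_le_mul_of_nonneg_right hPE hlogb0
      _ = _ := hindval.symm
      _ ≤ I N := hind
  -- limits
  have hL0 : (0:ℝ) < (L:ℝ) := by linarith
  have hupper_lim : Tendsto (fun N : ℕ =>
      (Real.logb 2 (1 + c * ((L:ℝ) * b N)) + C4) / D N) atTop (nhds 1) := by
    have h := tendsto_logb_ratio_nat (c * (L:ℝ) * (2 / m)) (c * ((L:ℝ) / m))
      (1 + c * (L:ℝ)) 1 C4 (by positivity) (by positivity)
    refine h.congr fun N => ?_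
    have e1 : 1 + c * (L:ℝ) + c * (L:ℝ) * (2 / m) * Real.log N =
        1 + c * ((L:ℝ) * b N) := by
      simp only [hb_def]; ring
    rw [e1]
  have hD_pos : ∀ᶠ N : ℕ in atTop, 0 < D N := by
    filter_upwards [eventually_gt_atTop L] with N hN
    have h1 : (1:ℝ) < N := by
      have : 1 < N := lt_of_le_of_lt hL hN
      exact_mod_cast this
    have hlog : 0 < Real.log N := Real.log_pos h1
    have hpos : 0 < c * ((L:ℝ) / m) * Real.log N := by positivity
    simp only [hD_def]
    exact Real.logb_pos one_lt_two (by linarith)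
  have hlower_lim : Tendsto (fun N : ℕ =>
      (1 - Real.exp (-((N:ℝ) * p N))) * (Real.logb 2 (1 + c * t N) / D N))
      atTop (nhds 1) := by
    have h2 : Tendsto (fun N : ℕ => Real.logb 2 (1 + c * t N) / D N) atTop (nhds 1) := by
      have h := tendsto_logb_ratio_nat (c * (1 / (2 * (m + 1)))) (c * ((L:ℝ) / m))
        (1 + c) 1 0 (by positivity) (by positivity)
      simp only [add_zero] at h
      refine h.congr fun N => ?_
      have e1 : 1 + c + c * (1 / (2 * (m + 1))) * Real.log N = 1 + c * t N := by
        simp only [ht_def]; field_simp; ring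
      rw [e1]
    have h1 : Tendsto (fun N : ℕ => 1 - Real.exp (-((N:ℝ) * p N))) atTop (nhds 1) := by
      have hNp : Tendsto (fun N : ℕ => (N:ℝ) * p N) atTop atTop := by
        have hrt : Tendsto (fun N : ℕ => ((N:ℝ)) ^ ((1:ℝ)/2)) atTop atTop :=
          (tendsto_rpow_atTop (by norm_num)).comp tendsto_natCast_atTop_atTop
        have hconst : (0:ℝ) < C1 * Real.exp (-(2 * (m + 1))) := by positivity
        have hmul := hrt.const_mul_atTop hconst
        refine hmul.congr' ?_
        filter_upwards [eventually_ge_atTop 1] with N hN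
        have hNpos : (0:ℝ) < N := by
          have : 0 < N := lt_of_lt_of_le zero_lt_one hN
          exact_mod_cast this
        have e2 : (m + 1) * (t N + 1) = 2 * (m + 1) + Real.log N / 2 := by
          simp only [ht_def]; field_simp; ring
        have e3 : Real.exp (-((m + 1) * (t N + 1))) =
            Real.exp (-(2 * (m + 1))) * (N:ℝ) ^ (-(1:ℝ)/2) := by
          rw [e2, neg_add, Real.exp_add]
          congr 1
          rw [Real.rpow_def_of_pos hNpos]
          congr 1
          ring
        have e4 : (N:ℝ) * (N:ℝ) ^ (-(1:ℝ)/2) = (N:ℝ) ^ ((1:ℝ)/2) := by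
          nth_rewrite 1 [show (N:ℝ) = (N:ℝ) ^ (1:ℝ) from (Real.rpow_one _).symm]
          rw [← Real.rpow_add hNpos]
          norm_num
        simp only [hp_def]
        rw [e3, ← e4]
        ring
      have hexp : Tendsto (fun N : ℕ => Real.exp (-((N:ℝ) * p N))) atTop (nhds 0) :=
        Real.tendsto_exp_atBot.comp (tendsto_neg_atTop_atBot.comp hNp)
      have hsub := (tendsto_const_nhds (x := (1:ℝ)) (f := atTop)).sub hexp
      simpa using hsub
    have hfin := h1.mul h2
    rwa [one_mul] at hfin
  -- squeeze
  refine tendsto_of_tendsto_of_tendsto_of_le_of_le' hlower_lim hupper_lim ?_ ?_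
  · filter_upwards [eventually_gt_atTop L, hD_pos] with N hN hD
    rw [← mul_div_assoc]
    exact div_le_div_of_nonneg_right (lower N hN) hD.le
  · filter_upwards [eventually_gt_atTop L, hD_pos] with N hN hD
    exact div_le_div_of_nonneg_right (upper N hN) hD.le
end

section
/- Let m ≥ 1/2 and let L ≥ 1 be a fixed integer. For each N > L, let W_{1,N}, …, W_{N,N} be i.i.d. real random variables, each with the normalized Gamma(m) distribution, and let T_N denote the top-L sum of (W_{1,N}, …, W_{N,N}). Then E[T_N] divided by (L/m) log N converges to 1 as N → ∞. -/
open MeasureTheory ProbabilityTheory Filter Real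

namespace StmtAux
open Set
open scoped ENNReal NNReal

section TopSum
variable {N L : ℕ}

lemma powersetCard_univ_nonempty (hLN : L ≤ N) :
    ((Finset.univ : Finset (Fin N)).powersetCard L).Nonempty :=
  Finset.powersetCard_nonempty.2 (by simpa using hLN)

lemma topSum_eq_sup' (hLN : L ≤ N) (w : Fin N → ℝ) :
    topSum L w = (Finset.univ.powersetCard L).sup' (powersetCard_univ_nonempty hLN)
      (fun S => ∑ n ∈ S, w n) := by
  unfold topSum
  rw [Finset.sup'_eq_csSup_image]
  congr 1
  ext x
  simp only [Set.mem_setOf_eq, Set.mem_image, Finset.mem_coe, Finset.mem_powersetCard]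
  constructor
  · rintro ⟨S, hS, rfl⟩; exact ⟨S, ⟨Finset.subset_univ S, hS⟩, rfl⟩
  · rintro ⟨S, ⟨-, hS⟩, rfl⟩; exact ⟨S, hS, rfl⟩

lemma topSum_le (hLN : L ≤ N) (w : Fin N → ℝ) {B : ℝ}
    (h : ∀ S : Finset (Fin N), S.card = L → ∑ n ∈ S, w n ≤ B) : topSum L w ≤ B := by
  rw [topSum_eq_sup' hLN]
  exact Finset.sup'_le _ _ fun S hS => h S (Finset.mem_powersetCard.1 hS).2

lemma le_topSum (hLN : L ≤ N) (w : Fin N → ℝ) {S : Finset (Fin N)} (hS : S.card = L) :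
    ∑ n ∈ S, w n ≤ topSum L w := by
  rw [topSum_eq_sup' hLN]
  exact Finset.le_sup' (fun S => ∑ n ∈ S, w n)
    (Finset.mem_powersetCard.2 ⟨Finset.subset_univ S, hS⟩)

lemma abs_topSum_le (hL : 1 ≤ L) (hLN : L ≤ N) (w : Fin N → ℝ) :
    |topSum L w| ≤ ∑ n, |w n| := by
  rw [abs_le]
  constructor
  · obtain ⟨S, -, hS⟩ := Finset.exists_subset_card_eq (by simpa using hLN :
      L ≤ (Finset.univ : Finset (Fin N)).card)
    refine le_trans ?_ (le_topSum hLN w hS)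
    calc -∑ n, |w n| ≤ -∑ n ∈ S, |w n| := by
          apply neg_le_neg
          exact Finset.sum_le_sum_of_subset_of_nonneg (Finset.subset_univ S)
            (fun i _ _ => abs_nonneg _)
      _ ≤ ∑ n ∈ S, w n := by
          rw [← Finset.sum_neg_distrib]
          exact Finset.sum_le_sum fun i _ => neg_abs_le _
  · refine topSum_le hLN w fun S hS => ?_
    calc ∑ n ∈ S, w n ≤ ∑ n ∈ S, |w n| := Finset.sum_le_sum fun i _ => le_abs_self _
      _ ≤ ∑ n, |w n| := Finset.sum_le_sum_of_subset_of_nonneg (Finset.subset_univ S)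
          (fun i _ _ => abs_nonneg _)

lemma topSum_nonneg (hLN : L ≤ N) {w : Fin N → ℝ} (hw : ∀ n, 0 ≤ w n) :
    0 ≤ topSum L w := by
  obtain ⟨S, -, hS⟩ := Finset.exists_subset_card_eq (by simpa using hLN :
    L ≤ (Finset.univ : Finset (Fin N)).card)
  exact le_trans (Finset.sum_nonneg fun i _ => hw i) (le_topSum hLN w hS)

lemma topSum_le_add (hLN : L ≤ N) (w : Fin N → ℝ) (t : ℝ) :
    topSum L w ≤ L * t + ∑ n, max (w n - t) 0 := by
  refine topSum_le hLN w fun S hS => ?_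
  calc ∑ n ∈ S, w n ≤ ∑ n ∈ S, (t + max (w n - t) 0) := by
        refine Finset.sum_le_sum fun i _ => ?_
        have := le_max_left (w i - t) 0
        linarith
    _ = L * t + ∑ n ∈ S, max (w n - t) 0 := by
        rw [Finset.sum_add_distrib, Finset.sum_const, hS, nsmul_eq_mul]
    _ ≤ L * t + ∑ n, max (w n - t) 0 :=
        add_le_add le_rfl (Finset.sum_le_sum_of_subset_of_nonneg (Finset.subset_univ S)
          (fun i _ _ => le_max_right _ _))

lemma lt_topSum_of_card (hLN : L ≤ N) {w : Fin N → ℝ} {t : ℝ} {A : Finset (Fin N)}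
    (hA : A.card = L) (h : ∀ n ∈ A, t < w n) : L * t ≤ topSum L w := by
  refine le_trans ?_ (le_topSum hLN w hA)
  calc (L : ℝ) * t = ∑ _n ∈ A, t := by rw [Finset.sum_const, hA, nsmul_eq_mul]
    _ ≤ ∑ n ∈ A, w n := Finset.sum_le_sum fun i hi => (h i hi).le

lemma measurable_topSum {α : Type*} [MeasurableSpace α] (hLN : L ≤ N)
    {W : Fin N → α → ℝ} (hW : ∀ n, Measurable (W n)) :
    Measurable (fun ω => topSum L (fun n => W n ω)) := by
  have : (fun ω => topSum L (fun n => W n ω))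
      = (Finset.univ.powersetCard L).sup' (powersetCard_univ_nonempty hLN)
        (fun S ω => ∑ n ∈ S, W n ω) := by
    ext ω
    rw [topSum_eq_sup' hLN, Finset.sup'_apply]
  rw [this]
  exact Finset.measurable_sup' _ fun S _ => Finset.measurable_sum _ fun n _ => hW n

end TopSum

section GammaFacts

variable {m : ℝ}

lemma gamma_ae_nonneg (hm0 : 0 < m) : ∀ᵐ x ∂(gammaMeasure m m), 0 ≤ x := by
  rw [ae_iff]
  have : {x : ℝ | ¬ 0 ≤ x} = Iio 0 := by ext x; simp [not_le]
  rw [this, gammaMeasure, withDensity_apply _ measurableSet_Iio]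
  simpa using lintegral_gammaPDF_of_nonpos (le_refl (0:ℝ)) (a := m) (r := m)

lemma key_density (hm0 : 0 < m) {s : ℝ} (hsm : s < m) (x : ℝ) :
    ENNReal.ofReal (exp (s*x)) * gammaPDF m m x
      = ENNReal.ofReal ((m/(m-s))^m) * gammaPDF m (m-s) x := by
  have hms : (0:ℝ) < m - s := by linarith
  rcases lt_or_ge x 0 with hx | hx
  · rw [gammaPDF_of_neg hx, gammaPDF_of_neg hx, mul_zero, mul_zero]
  · rw [gammaPDF_of_nonneg hx, gammaPDF_of_nonneg hx,
      ← ENNReal.ofReal_mul (exp_nonneg _),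
      ← ENNReal.ofReal_mul (Real.rpow_nonneg (div_nonneg hm0.le hms.le) _)]
    congr 1
    have h1 : (m/(m-s))^m = m^m / (m-s)^m := Real.div_rpow hm0.le hms.le m
    have h2 : exp (s*x) * exp (-(m*x)) = exp (-((m-s)*x)) := by
      rw [← Real.exp_add]; ring_nf
    rw [h1]
    have hG : Real.Gamma m ≠ 0 := (Real.Gamma_pos_of_pos hm0).ne'
    have hpow : ((m-s):ℝ)^m ≠ 0 := (Real.rpow_pos_of_pos hms m).ne'
    field_simp
    rw [mul_comm x m, mul_comm x (m - s), ← h2]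
    ring

lemma lintegral_exp_gamma (hm0 : 0 < m) {s : ℝ} (hsm : s < m) :
    ∫⁻ x, ENNReal.ofReal (exp (s*x)) ∂(gammaMeasure m m) = ENNReal.ofReal ((m/(m-s))^m) := by
  have hms : (0:ℝ) < m - s := by linarith
  have hpdf : Measurable (gammaPDF m m) := (measurable_gammaPDFReal m m).ennreal_ofReal
  rw [gammaMeasure, lintegral_withDensity_eq_lintegral_mul _ hpdf (by fun_prop)]
  have : ∀ x, (gammaPDF m m * fun x => ENNReal.ofReal (exp (s*x))) x
      = ENNReal.ofReal ((m/(m-s))^m) * gammaPDF m (m-s) x := by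
    intro x
    rw [Pi.mul_apply, mul_comm]
    exact key_density hm0 hsm x
  have hpdf2 : Measurable (gammaPDF m (m-s)) := (measurable_gammaPDFReal m (m-s)).ennreal_ofReal
  rw [lintegral_congr this, lintegral_const_mul _ hpdf2,
    lintegral_gammaPDF_eq_one hm0 hms, mul_one]

lemma integrable_exp_gamma (hm0 : 0 < m) {s : ℝ} (hsm : s < m) :
    Integrable (fun x => exp (s*x)) (gammaMeasure m m) := by
  refine ⟨(by fun_prop : Measurable fun x => exp (s*x)).aestronglyMeasurable, ?_⟩
  rw [hasFiniteIntegral_iff_norm]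
  have : ∀ x : ℝ, ENNReal.ofReal ‖exp (s*x)‖ = ENNReal.ofReal (exp (s*x)) := by
    intro x; rw [Real.norm_eq_abs, abs_of_nonneg (exp_nonneg _)]
  simp only [this, lintegral_exp_gamma hm0 hsm]
  exact ENNReal.ofReal_lt_top

lemma integral_exp_gamma (hm0 : 0 < m) {s : ℝ} (hsm : s < m) :
    ∫ x, exp (s*x) ∂(gammaMeasure m m) = (m/(m-s))^m := by
  have hms : (0:ℝ) < m - s := by linarith
  rw [integral_eq_lintegral_of_nonneg_ae (ae_of_all _ fun x => exp_nonneg _)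
    (by fun_prop : Measurable fun x => exp (s*x)).aestronglyMeasurable,
    lintegral_exp_gamma hm0 hsm,
    ENNReal.toReal_ofReal (Real.rpow_nonneg (div_nonneg hm0.le hms.le) _)]

lemma max_le_exp_div {s u : ℝ} (hs : 0 < s) : max u 0 ≤ exp (s*u) / s := by
  refine max_le ?_ (by positivity)
  rw [le_div_iff₀ hs, mul_comm]
  calc s * u ≤ exp (s*u) - 1 := by linarith [Real.add_one_le_exp (s*u)]
    _ ≤ exp (s*u) := by linarith

lemma integrable_max_sub (hm0 : 0 < m) (t : ℝ) :
    Integrable (fun x => max (x - t) 0) (gammaMeasure m m) := by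
  have h2 : (0:ℝ) < m/2 := by positivity
  refine Integrable.mono' (g := fun x => exp (-(m/2*t)) / (m/2) * exp ((m/2)*x))
    (((integrable_exp_gamma hm0 (by linarith : m/2 < m)).const_mul _))
    ((measurable_id.sub_const t).max measurable_const).aestronglyMeasurable ?_
  refine ae_of_all _ fun x => ?_
  rw [Real.norm_eq_abs, abs_of_nonneg (le_max_right _ _)]
  calc max (x - t) 0 ≤ exp ((m/2)*(x - t)) / (m/2) := max_le_exp_div h2
    _ = exp (-(m/2*t)) / (m/2) * exp ((m/2)*x) := by
        rw [mul_sub, sub_eq_add_neg ((m/2)*x), Real.exp_add, mul_comm (Real.exp ((m/2)*x)),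
          mul_div_right_comm]

lemma integral_max_le (hm0 : 0 < m) {s : ℝ} (hs : 0 < s) (hsm : s < m) (t : ℝ) :
    ∫ x, max (x - t) 0 ∂(gammaMeasure m m) ≤ exp (-(s*t)) / s * (m/(m-s))^m := by
  have key : ∀ x : ℝ, max (x - t) 0 ≤ exp (-(s*t)) / s * exp (s*x) := by
    intro x
    calc max (x - t) 0 ≤ exp (s*(x - t)) / s := max_le_exp_div hs
      _ = exp (-(s*t)) / s * exp (s*x) := by
          rw [mul_sub, sub_eq_add_neg (s*x), Real.exp_add]; ring
  calc ∫ x, max (x - t) 0 ∂(gammaMeasure m m)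
      ≤ ∫ x, exp (-(s*t)) / s * exp (s*x) ∂(gammaMeasure m m) :=
        integral_mono (integrable_max_sub hm0 t)
          ((integrable_exp_gamma hm0 hsm).const_mul _) key
    _ = exp (-(s*t)) / s * (m/(m-s))^m := by
        rw [integral_const_mul, integral_exp_gamma hm0 hsm]

lemma integrable_id_gamma (hm0 : 0 < m) : Integrable id (gammaMeasure m m) := by
  have h2 : (0:ℝ) < m/2 := by positivity
  refine Integrable.mono' (g := fun x => exp ((m/2)*x) / (m/2))
    ((integrable_exp_gamma hm0 (by linarith : m/2 < m)).div_const _) measurable_id.aestronglyMeasurable ?_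
  filter_upwards [gamma_ae_nonneg hm0] with x hx
  rw [id, Real.norm_eq_abs, abs_of_nonneg hx]
  have := max_le_exp_div (u := x) h2
  rw [max_eq_left hx] at this
  exact this

lemma gamma_tail_lb (hm : 1/2 ≤ m) {t : ℝ} (ht : 1 ≤ t) :
    ENNReal.ofReal (m^m / Real.Gamma m * ((t+1)^(-(2:ℝ)⁻¹) * exp (-(m*(t+1)))))
      ≤ gammaMeasure m m (Ioi t) := by
  have hm0 : 0 < m := by linarith
  rw [gammaMeasure, withDensity_apply _ measurableSet_Ioi]
  calc ENNReal.ofReal (m^m / Real.Gamma m * ((t+1)^(-(2:ℝ)⁻¹) * exp (-(m*(t+1)))))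
      = ∫⁻ _ in Ioc t (t+1), ENNReal.ofReal (m^m / Real.Gamma m *
          ((t+1)^(-(2:ℝ)⁻¹) * exp (-(m*(t+1))))) := by
        rw [setLIntegral_const, Real.volume_Ioc, show t+1-t = 1 by ring,
          ENNReal.ofReal_one, mul_one]
    _ ≤ ∫⁻ x in Ioc t (t+1), gammaPDF m m x := by
        refine setLIntegral_mono ((measurable_gammaPDFReal m m).ennreal_ofReal) fun x hx => ?_
        obtain ⟨hx1, hx2⟩ := hx
        have hx0 : (0:ℝ) < x := lt_of_lt_of_le (by linarith) hx1.le
        rw [gammaPDF_of_nonneg hx0.le]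
        refine ENNReal.ofReal_le_ofReal ?_
        rw [mul_assoc]
        refine mul_le_mul_of_nonneg_left ?_ (by positivity)
        have h1 : (t+1)^(-(2:ℝ)⁻¹) ≤ x^(m-1) := by
          calc (t+1)^(-(2:ℝ)⁻¹) ≤ x^(-(2:ℝ)⁻¹) :=
              Real.rpow_le_rpow_of_nonpos hx0 hx2 (by norm_num)
            _ ≤ x^(m-1) :=
              Real.rpow_le_rpow_of_exponent_le (by linarith) (by linarith)
        have h2 : exp (-(m*(t+1))) ≤ exp (-(m*x)) := by
          apply Real.exp_le_exp.2
          have : m * x ≤ m * (t+1) := mul_le_mul_of_nonneg_left hx2 hm0.le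
          linarith
        exact mul_le_mul h1 h2 (Real.exp_pos _).le (by positivity)
    _ ≤ ∫⁻ x in Ioi t, gammaPDF m m x := lintegral_mono_set Ioc_subset_Ioi_self

end GammaFacts

section OmegaLevel

variable {m : ℝ} {L N : ℕ} {Ω : Type*} [MeasurableSpace Ω] {P : Measure Ω}
  [IsProbabilityMeasure P] {W : Fin N → Ω → ℝ}

lemma integrable_W (hm0 : 0 < m) {n : Fin N} (hW : Measurable (W n))
    (hd : P.map (W n) = gammaMeasure m m) : Integrable (W n) P := by
  have := (integrable_map_measure
    (by rw [hd]; exact measurable_id.aestronglyMeasurable) hW.aemeasurable).1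
    (by rw [hd]; exact integrable_id_gamma hm0)
  simpa [Function.comp] using this

lemma integrable_maxW (hm0 : 0 < m) {n : Fin N} (hW : Measurable (W n))
    (hd : P.map (W n) = gammaMeasure m m) (t : ℝ) :
    Integrable (fun ω => max (W n ω - t) 0) P := by
  have := (integrable_map_measure
    (g := fun x => max (x - t) 0)
    (by exact ((measurable_id.sub_const t).max measurable_const).aestronglyMeasurable)
    hW.aemeasurable).1 (by rw [hd]; exact integrable_max_sub hm0 t)
  exact this

lemma integral_maxW (hm0 : 0 < m) {n : Fin N} (hW : Measurable (W n))
    (hd : P.map (W n) = gammaMeasure m m) {s : ℝ} (hs : 0 < s) (hsm : s < m) (t : ℝ) :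
    ∫ ω, max (W n ω - t) 0 ∂P ≤ exp (-(s*t)) / s * (m/(m-s))^m := by
  have h := integral_map (μ := P) (f := fun x => max (x - t) 0) hW.aemeasurable
    (by rw [hd]; exact ((measurable_id.sub_const t).max measurable_const).aestronglyMeasurable)
  rw [hd] at h
  rw [← h]
  exact integral_max_le hm0 hs hsm t

lemma integrable_topSum (hm0 : 0 < m) (hL : 1 ≤ L) (hLN : L ≤ N)
    (hW : ∀ n, Measurable (W n)) (hd : ∀ n, P.map (W n) = gammaMeasure m m) :
    Integrable (fun ω => topSum L (fun n => W n ω)) P := by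
  refine Integrable.mono' (g := fun ω => ∑ n, |W n ω|)
    (integrable_finset_sum _ fun n _ => (integrable_W hm0 (hW n) (hd n)).abs)
    (measurable_topSum hLN hW).aestronglyMeasurable (ae_of_all _ fun ω => ?_)
  exact abs_topSum_le hL hLN _

lemma expectation_upper (hm0 : 0 < m) (hL : 1 ≤ L) (hLN : L ≤ N)
    (hW : ∀ n, Measurable (W n)) (hd : ∀ n, P.map (W n) = gammaMeasure m m)
    {s : ℝ} (hs : 0 < s) (hsm : s < m) (t : ℝ) :
    ∫ ω, topSum L (fun n => W n ω) ∂P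
      ≤ L * t + N * (exp (-(s*t)) / s * (m/(m-s))^m) := by
  have h1 : ∫ ω, topSum L (fun n => W n ω) ∂P
      ≤ ∫ ω, (L * t + ∑ n, max (W n ω - t) 0) ∂P := by
    refine integral_mono (integrable_topSum hm0 hL hLN hW hd) ?_
      (fun ω => topSum_le_add hLN _ t)
    exact (integrable_const _).add (integrable_finset_sum _ fun n _ =>
      integrable_maxW hm0 (hW n) (hd n) t)
  refine h1.trans ?_
  rw [integral_add (integrable_const _) (integrable_finset_sum _ fun n _ =>
      integrable_maxW hm0 (hW n) (hd n) t), integral_const, probReal_univ,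
      smul_eq_mul, one_mul,
      integral_finset_sum _ fun n _ => integrable_maxW hm0 (hW n) (hd n) t]
  refine add_le_add le_rfl ?_
  calc ∑ n : Fin N, ∫ ω, max (W n ω - t) 0 ∂P
      ≤ ∑ _n : Fin N, (exp (-(s*t)) / s * (m/(m-s))^m) :=
        Finset.sum_le_sum fun n _ => integral_maxW hm0 (hW n) (hd n) hs hsm t
    _ = N * (exp (-(s*t)) / s * (m/(m-s))^m) := by
        rw [Finset.sum_const, Finset.card_univ, Fintype.card_fin, nsmul_eq_mul]

end OmegaLevel
section Lower

variable {m : ℝ} {L N : ℕ} {Ω : Type*} [MeasurableSpace Ω] {P : Measure Ω}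
  [IsProbabilityMeasure P] {W : Fin N → Ω → ℝ}

lemma expectation_lower (hm0 : 0 < m) (hL : 1 ≤ L) (hLN : L < N)
    (hW : ∀ n, Measurable (W n))
    (hindep : iIndepFun W P)
    (hd : ∀ n, P.map (W n) = gammaMeasure m m) {t : ℝ} (ht : 0 ≤ t) :
    L * t * (1 - (N.choose (L-1) : ℝ) * (gammaMeasure m m (Iic t)).toReal ^ (N - L + 1))
      ≤ ∫ ω, topSum L (fun n => W n ω) ∂P := by
  haveI : IsProbabilityMeasure (gammaMeasure m m) := isProbabilityMeasure_gammaMeasure hm0 hm0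
  set k := N - L + 1 with hk
  set E : Set Ω := ⋃ A ∈ Finset.univ.powersetCard L, ⋂ n ∈ A, W n ⁻¹' Ioi t with hE
  have hEmeas : MeasurableSet E := by
    refine Finset.measurableSet_biUnion _ fun A _ => ?_
    exact Finset.measurableSet_biInter _ fun n _ => (hW n) measurableSet_Ioi
  -- probability of complement
  have hsub : Eᶜ ⊆ ⋃ A ∈ Finset.univ.powersetCard k, ⋂ n ∈ A, W n ⁻¹' Iic t := by
    intro ω hω
    set B : Finset (Fin N) := Finset.univ.filter (fun n => t < W n ω) with hB
    have hBcard : B.card < L := by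
      by_contra hc
      push_neg at hc
      obtain ⟨A, hAB, hAcard⟩ := Finset.exists_subset_card_eq hc
      refine hω ?_
      refine Set.mem_biUnion (Finset.mem_powersetCard.2 ⟨Finset.subset_univ A, hAcard⟩) ?_
      refine Set.mem_biInter fun n hn => ?_
      have := hAB hn
      rw [hB, Finset.mem_filter] at this
      exact this.2
    have hcompl : k ≤ Bᶜ.card := by
      rw [Finset.card_compl, Fintype.card_fin]
      omega
    obtain ⟨A, hAB, hAcard⟩ := Finset.exists_subset_card_eq hcompl
    refine Set.mem_biUnion (Finset.mem_powersetCard.2 ⟨Finset.subset_univ A, hAcard⟩) ?_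
    refine Set.mem_biInter fun n hn => ?_
    have := hAB hn
    rw [Finset.mem_compl, hB, Finset.mem_filter] at this
    simp only [Set.mem_preimage, Set.mem_Iic]
    push_neg at this
    exact this (Finset.mem_univ n)
  have hprod : ∀ A : Finset (Fin N), P (⋂ n ∈ A, W n ⁻¹' Iic t)
      = (gammaMeasure m m (Iic t)) ^ A.card := by
    intro A
    rw [hindep.measure_inter_preimage_eq_mul A (sets := fun _ => Iic t)
      (fun i _ => measurableSet_Iic)]
    have : ∀ n : Fin N, P (W n ⁻¹' Iic t) = gammaMeasure m m (Iic t) := by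
      intro n
      rw [← hd n, Measure.map_apply (hW n) measurableSet_Iic]
    rw [Finset.prod_congr rfl (fun n _ => this n), Finset.prod_const]
  have hPEc : P Eᶜ ≤ (N.choose k : ℝ≥0∞) * (gammaMeasure m m (Iic t)) ^ k := by
    calc P Eᶜ ≤ P (⋃ A ∈ Finset.univ.powersetCard k, ⋂ n ∈ A, W n ⁻¹' Iic t) :=
        measure_mono hsub
      _ ≤ ∑ A ∈ Finset.univ.powersetCard k, P (⋂ n ∈ A, W n ⁻¹' Iic t) :=
        measure_biUnion_finset_le _ _
      _ = ∑ A ∈ Finset.univ.powersetCard k, (gammaMeasure m m (Iic t)) ^ k := by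
        refine Finset.sum_congr rfl fun A hA => ?_
        rw [hprod A, (Finset.mem_powersetCard.1 hA).2]
      _ = (N.choose k : ℝ≥0∞) * (gammaMeasure m m (Iic t)) ^ k := by
        rw [Finset.sum_const, Finset.card_powersetCard, Finset.card_univ, Fintype.card_fin,
          nsmul_eq_mul]
  -- real version
  have hq1 : gammaMeasure m m (Iic t) ≤ 1 := prob_le_one
  have hPEcReal : (P Eᶜ).toReal
      ≤ (N.choose k : ℝ) * (gammaMeasure m m (Iic t)).toReal ^ k := by
    have hfin : (N.choose k : ℝ≥0∞) * (gammaMeasure m m (Iic t)) ^ k ≠ ⊤ :=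
      ENNReal.mul_ne_top (ENNReal.natCast_ne_top _)
        (ENNReal.pow_ne_top (lt_of_le_of_lt hq1 ENNReal.one_lt_top).ne)
    calc (P Eᶜ).toReal ≤ ((N.choose k : ℝ≥0∞) * (gammaMeasure m m (Iic t)) ^ k).toReal :=
        ENNReal.toReal_mono hfin hPEc
      _ = (N.choose k : ℝ) * (gammaMeasure m m (Iic t)).toReal ^ k := by
        simp [ENNReal.toReal_mul, ENNReal.toReal_pow]
  have hchoose : N.choose k = N.choose (L-1) := by
    have h1 : N - (L-1) = k := by omega
    rw [← h1, Nat.choose_symm (by omega)]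
  -- a.e. lower bound by indicator
  have hae : ∀ᵐ ω ∂P, ∀ n, 0 ≤ W n ω := by
    rw [ae_all_iff]
    intro n
    have := ae_of_ae_map (hW n).aemeasurable (by rw [hd n]; exact gamma_ae_nonneg hm0 :
      ∀ᵐ x ∂(P.map (W n)), 0 ≤ x)
    exact this
  have hptwise : ∀ᵐ ω ∂P, E.indicator (fun _ => (L:ℝ) * t) ω ≤ topSum L (fun n => W n ω) := by
    filter_upwards [hae] with ω hω
    by_cases hωE : ω ∈ E
    · rw [Set.indicator_of_mem hωE]
      obtain ⟨A, hA, hmem⟩ := Set.mem_iUnion₂.1 hωE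
      refine lt_topSum_of_card hLN.le (Finset.mem_powersetCard.1 hA).2 fun n hn => ?_
      have := Set.mem_iInter₂.1 hmem n hn
      exact this
    · rw [Set.indicator_of_notMem hωE]
      exact topSum_nonneg hLN.le hω
  have hint : ∫ ω, E.indicator (fun _ => (L:ℝ) * t) ω ∂P
      ≤ ∫ ω, topSum L (fun n => W n ω) ∂P :=
    integral_mono_ae ((integrable_const _).indicator hEmeas)
      (integrable_topSum hm0 hL hLN.le hW hd) hptwise
  rw [integral_indicator_const _ hEmeas, smul_eq_mul] at hint
  refine le_trans ?_ hint
  rw [mul_comm (P.real E), measureReal_def]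
  refine mul_le_mul_of_nonneg_left ?_ (by positivity)
  -- 1 - bound ≤ P E
  have hPE : (P Eᶜ).toReal = 1 - (P E).toReal := by
    rw [prob_compl_eq_one_sub hEmeas, ENNReal.toReal_sub_of_le prob_le_one ENNReal.one_ne_top,
      ENNReal.toReal_one]
  rw [hchoose] at hPEcReal
  linarith [hPEcReal, hPE]
end Lower

lemma hlog : Tendsto (fun N : ℕ => Real.log N) atTop atTop :=
  Real.tendsto_log_atTop.comp tendsto_natCast_atTop_atTop

lemma hlogdiv {γ : ℝ} (hγ : 0 < γ) :
    Tendsto (fun N : ℕ => Real.log N / (N:ℝ)^γ) atTop (nhds 0) :=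
  ((isLittleO_log_rpow_atTop hγ).tendsto_div_nhds_zero).comp tendsto_natCast_atTop_atTop

lemma eventually_upper {D : ℕ → ℝ} {m : ℝ} {L : ℕ} (hm0 : 0 < m) (hL : 1 ≤ L)
    (hbound : ∀ s : ℝ, 0 < s → s < m → ∀ N : ℕ, L < N → ∀ t : ℝ,
      D N ≤ L * t + N * (exp (-(s*t)) / s * (m/(m-s))^m))
    {u : ℝ} (hu : (L:ℝ)/m < u) :
    ∀ᶠ N : ℕ in atTop, D N ≤ u * Real.log N := by
  have hL0 : (0:ℝ) < L := by exact_mod_cast hL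
  set a : ℝ := (1/m + u/L)/2 with ha
  have hua : (1:ℝ)/m < u/L := by
    rw [div_lt_div_iff₀ hm0 hL0, one_mul]
    rw [div_lt_iff₀ hm0] at hu
    linarith
  have ha1 : 1/m < a := by rw [ha]; linarith
  have ha2 : a < u/L := by rw [ha]; linarith
  have ha0 : 0 < a := lt_trans (by positivity) ha1
  have hia : 1/a < m := by
    rw [div_lt_iff₀ ha0]
    rw [div_lt_iff₀ hm0] at ha1
    nlinarith
  set s : ℝ := (1/a + m)/2 with hs
  have hia0 : 0 < 1/a := by positivity
  have hs0 : 0 < s := by rw [hs]; linarith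
  have hsm : s < m := by rw [hs]; linarith
  have hsa : 1 < s * a := by
    rw [hs]
    have h1 : 1/a * a = 1 := by field_simp
    nlinarith [ha0, hia]
  set M : ℝ := (m/(m-s))^m with hM
  have hM0 : 0 ≤ M := Real.rpow_nonneg (div_nonneg hm0.le (by linarith)) _
  set g : ℕ → ℝ := fun N => exp ((1 - s*a) * Real.log N) * (M/s) with hg
  have hg0 : Tendsto g atTop (nhds 0) := by
    have h1 : Tendsto (fun N : ℕ => (1 - s*a) * Real.log N) atTop atBot :=
      (tendsto_const_mul_atBot_of_neg (by linarith)).2 hlog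
    have h2 : Tendsto (fun N : ℕ => exp ((1 - s*a) * Real.log N)) atTop (nhds 0) :=
      Real.tendsto_exp_atBot.comp h1
    simpa using h2.mul_const (M/s)
  have hev1 : ∀ᶠ N : ℕ in atTop, g N < 1 := hg0.eventually (gt_mem_nhds one_pos)
  have hev2 : ∀ᶠ N : ℕ in atTop, 1 ≤ (u - L*a) * Real.log N := by
    have hpos : 0 < u - L*a := by
      rw [lt_div_iff₀ hL0] at ha2
      nlinarith [ha2]
    exact (hlog.const_mul_atTop hpos).eventually_ge_atTop 1
  filter_upwards [hev1, hev2, eventually_gt_atTop L, eventually_ge_atTop 1] with N h1 h2 hLN hN1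
  have hNpos : (0:ℝ) < N := by exact_mod_cast Nat.lt_of_lt_of_le Nat.zero_lt_one hN1
  have key := hbound s hs0 hsm N hLN (a * Real.log N)
  rw [← hM] at key
  have heq : (N:ℝ) * (exp (-(s*(a * Real.log N))) / s * M) = g N := by
    show (N:ℝ) * (exp (-(s*(a * Real.log N))) / s * M) = exp ((1 - s*a) * Real.log N) * (M/s)
    rw [show ((1:ℝ) - s*a) * Real.log N = Real.log N + -(s*(a * Real.log N)) by ring,
      Real.exp_add, Real.exp_log hNpos]
    ring
  rw [heq] at key
  have hfin : (L:ℝ) * (a * Real.log N) + (u - L*a) * Real.log N = u * Real.log N := by ring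
  linarith

lemma eventually_lower {D : ℕ → ℝ} {m : ℝ} {L : ℕ} (hm : 1/2 ≤ m) (hL : 1 ≤ L)
    (hbound : ∀ N : ℕ, L < N → ∀ t : ℝ, 0 ≤ t →
      L * t * (1 - (N.choose (L-1) : ℝ) * (gammaMeasure m m (Iic t)).toReal ^ (N - L + 1))
        ≤ D N)
    {u : ℝ} (hu0 : 0 < u) (hu : u < (L:ℝ)/m) :
    ∀ᶠ N : ℕ in atTop, u * Real.log N ≤ D N := by
  have hm0 : 0 < m := by linarith
  haveI : IsProbabilityMeasure (gammaMeasure m m) := isProbabilityMeasure_gammaMeasure hm0 hm0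
  have hL0 : (0:ℝ) < L := by exact_mod_cast hL
  have hua : u/L < 1/m := by
    rw [div_lt_div_iff₀ hL0 hm0, one_mul]
    rw [lt_div_iff₀ hm0] at hu
    linarith
  set a : ℝ := (u/L + 1/m)/2 with ha
  have ha1 : u/L < a := by rw [ha]; linarith
  have ha2 : a < 1/m := by rw [ha]; linarith
  have ha0 : 0 < a := lt_trans (by positivity) ha1
  have hma : m * a < 1 := by
    rw [lt_div_iff₀ hm0] at ha2
    linarith
  set β : ℝ := (1 - m*a)/2 with hβ
  have hβ0 : 0 < β := by rw [hβ]; linarith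
  set c₂ : ℝ := m^m / Real.Gamma m with hc₂
  have hc₂0 : 0 < c₂ := by
    rw [hc₂]
    exact div_pos (Real.rpow_pos_of_pos hm0 m) (Real.Gamma_pos_of_pos hm0)
  set c₃ : ℝ := c₂ * exp (-m) / 2 with hc₃
  have hc₃0 : 0 < c₃ := by rw [hc₃]; positivity
  set δ : ℝ := 1 - u/(L*a) with hδ
  have huLa : u < L * a := by
    rw [div_lt_iff₀ hL0] at ha1
    nlinarith [ha1]
  have hδ0 : 0 < δ := by
    rw [hδ]
    have : u/(L*a) < 1 := by
      rw [div_lt_one (by positivity)]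
      exact huLa
    linarith
  have hevlog : ∀ᶠ N : ℕ in atTop, 1 ≤ a * Real.log N :=
    (hlog.const_mul_atTop ha0).eventually_ge_atTop 1
  have hevsmall : ∀ᶠ N : ℕ in atTop, a * Real.log N + 1 + 1 ≤ (N:ℝ)^β := by
    have h2 : Tendsto (fun N : ℕ => ((N:ℝ)^β)⁻¹) atTop (nhds 0) := by
      have h := (tendsto_rpow_neg_atTop hβ0).comp tendsto_natCast_atTop_atTop
      refine Tendsto.congr' ?_ h
      filter_upwards [eventually_ge_atTop 1] with N hN
      have hNpos : (0:ℝ) < N := by exact_mod_cast hN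
      simp [Function.comp, Real.rpow_neg hNpos.le]
    have h0 : Tendsto (fun N : ℕ => (a * Real.log N + 1 + 1) / (N:ℝ)^β) atTop (nhds 0) := by
      have h1 := (hlogdiv hβ0).const_mul a
      have hsum := (h1.add h2).add h2
      simp only [mul_zero, add_zero] at hsum
      refine Tendsto.congr (fun N => ?_) hsum
      simp only [add_div, mul_div_assoc, one_div]
    have h3 := h0.eventually (gt_mem_nhds one_pos)
    filter_upwards [h3, eventually_ge_atTop 1] with N hN hN1
    have hNpos : (0:ℝ) < N := by exact_mod_cast hN1
    have hNpow : (0:ℝ) < (N:ℝ)^β := by positivity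
    rw [div_lt_one hNpow] at hN
    linarith
  set γ : ℝ := 3*β/2 with hγdef
  have hγ0 : 0 < γ := by rw [hγdef]; linarith
  have hevdom : ∀ᶠ N : ℕ in atTop,
      Real.log N * (L-1 : ℝ) - c₃ * (N:ℝ)^γ ≤ Real.log δ := by
    have hr1 : Tendsto (fun N : ℕ => (c₃/2) * (N:ℝ)^γ) atTop atTop :=
      ((tendsto_rpow_atTop hγ0).comp tendsto_natCast_atTop_atTop).const_mul_atTop (by positivity)
    have hr2 : Tendsto (fun N : ℕ => (L-1 : ℝ) * (Real.log N / (N:ℝ)^γ)) atTop (nhds 0) := by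
      simpa using (hlogdiv hγ0).const_mul ((L:ℝ)-1)
    have hev3 : ∀ᶠ N : ℕ in atTop, (L-1:ℝ) * Real.log N ≤ (c₃/2) * (N:ℝ)^γ := by
      have h4 := hr2.eventually (gt_mem_nhds (show (0:ℝ) < c₃/2 by positivity))
      filter_upwards [h4, eventually_ge_atTop 1] with N hN hN1
      have hNpos : (0:ℝ) < N := by exact_mod_cast hN1
      have hNpow : (0:ℝ) < (N:ℝ)^γ := by positivity
      have heq : (L-1:ℝ) * Real.log N = ((L-1:ℝ) * (Real.log N / (N:ℝ)^γ)) * (N:ℝ)^γ := by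
        field_simp
      rw [heq]
      exact mul_le_mul_of_nonneg_right (le_of_lt hN) hNpow.le
    have hev4 := hr1.eventually_ge_atTop (-Real.log δ)
    filter_upwards [hev3, hev4] with N h3 h4
    have : Real.log N * (L-1:ℝ) = (L-1:ℝ) * Real.log N := mul_comm _ _
    linarith [h3, h4]
  filter_upwards [hevlog, hevsmall, eventually_ge_atTop (2*L), hevdom, eventually_gt_atTop L,
    eventually_ge_atTop 1] with N hNlog hNsmall hN2L hNdom hLN hN1
  have hNpos : (0:ℝ) < N := by exact_mod_cast hN1
  set t : ℝ := a * Real.log N with hT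
  have ht1 : 1 ≤ t := hNlog
  have ht0 : 0 ≤ t := by linarith
  set p : ℝ := (gammaMeasure m m (Ioi t)).toReal with hp
  set q : ℝ := (gammaMeasure m m (Iic t)).toReal with hq
  have hq1 : q = 1 - p := by
    rw [hq, hp, ← Set.compl_Ioi, prob_compl_eq_one_sub measurableSet_Ioi,
      ENNReal.toReal_sub_of_le prob_le_one ENNReal.one_ne_top, ENNReal.toReal_one]
  have hp0 : 0 ≤ p := ENNReal.toReal_nonneg
  have hplb : c₂ * ((t+1)^(-(2:ℝ)⁻¹) * exp (-(m*(t+1)))) ≤ p := by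
    have h := gamma_tail_lb hm ht1
    have hnn : (0:ℝ) ≤ c₂ * ((t+1)^(-(2:ℝ)⁻¹) * exp (-(m*(t+1)))) :=
      mul_nonneg hc₂0.le (mul_nonneg (Real.rpow_nonneg (by linarith) _) (exp_nonneg _))
    calc c₂ * ((t+1)^(-(2:ℝ)⁻¹) * exp (-(m*(t+1))))
        = (ENNReal.ofReal (c₂ * ((t+1)^(-(2:ℝ)⁻¹) * exp (-(m*(t+1)))))).toReal :=
          (ENNReal.toReal_ofReal hnn).symm
      _ ≤ p := ENNReal.toReal_mono (measure_ne_top _ _) h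
  set k : ℕ := N - L + 1 with hk
  have hkN : (N:ℝ)/2 ≤ (k:ℝ) := by
    have h1 : N ≤ 2 * k := by omega
    have h2 : (N:ℝ) ≤ 2*(k:ℝ) := by exact_mod_cast h1
    linarith
  have hqexp : q ≤ exp (-p) := by
    rw [hq1]
    linarith [Real.add_one_le_exp (-p)]
  have hqle : q ^ k ≤ exp (-((k:ℝ) * p)) := by
    calc q ^ k ≤ exp (-p) ^ k := pow_le_pow_left₀ ENNReal.toReal_nonneg hqexp k
      _ = exp (-((k:ℝ)*p)) := by
          rw [← Real.exp_nat_mul]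
          congr 1
          ring
  have hchoose : (N.choose (L-1) : ℝ) ≤ (N:ℝ)^(L-1) := by
    exact_mod_cast Nat.choose_le_pow N (L-1)
  -- lower bound on k * p via N^γ
  have hplb2 : c₂ * ((N:ℝ)^(-(β/2)) * (exp (-m) * (N:ℝ)^(-(m*a)))) ≤ p := by
    refine le_trans ?_ hplb
    have h1 : (N:ℝ)^(-(β/2)) ≤ (t+1)^(-(2:ℝ)⁻¹) := by
      have he : ((N:ℝ)^β)^(-(2:ℝ)⁻¹) = (N:ℝ)^(-(β/2)) := by
        rw [← Real.rpow_mul hNpos.le]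
        congr 1
        ring
      rw [← he]
      exact Real.rpow_le_rpow_of_nonpos (by linarith) (by linarith) (by norm_num)
    have h2 : exp (-(m*(t+1))) = exp (-m) * (N:ℝ)^(-(m*a)) := by
      rw [Real.rpow_def_of_pos hNpos, ← Real.exp_add]
      congr 1
      rw [hT]; ring
    rw [h2]
    refine mul_le_mul_of_nonneg_left ?_ hc₂0.le
    refine mul_le_mul_of_nonneg_right h1 ?_
    positivity
  have hklb : c₃ * (N:ℝ)^γ ≤ (k:ℝ) * p := by
    have hNγ : (N:ℝ)^γ = (N:ℝ) * ((N:ℝ)^(-(β/2)) * (N:ℝ)^(-(m*a))) := by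
      have h5 : γ = 1 + (-(β/2) + -(m*a)) := by rw [hγdef, hβ]; ring
      rw [h5, Real.rpow_add hNpos, Real.rpow_one, Real.rpow_add hNpos]
    have hstep : c₃ * (N:ℝ)^γ
        = ((N:ℝ)/2) * (c₂ * ((N:ℝ)^(-(β/2)) * (exp (-m) * (N:ℝ)^(-(m*a))))) := by
      rw [hNγ, hc₃]; ring
    rw [hstep]
    have hpl2nn : (0:ℝ) ≤ c₂ * ((N:ℝ)^(-(β/2)) * (exp (-m) * (N:ℝ)^(-(m*a)))) := by positivity
    calc ((N:ℝ)/2) * (c₂ * ((N:ℝ)^(-(β/2)) * (exp (-m) * (N:ℝ)^(-(m*a)))))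
        ≤ (k:ℝ) * (c₂ * ((N:ℝ)^(-(β/2)) * (exp (-m) * (N:ℝ)^(-(m*a))))) :=
          mul_le_mul_of_nonneg_right hkN hpl2nn
      _ ≤ (k:ℝ) * p := mul_le_mul_of_nonneg_left hplb2 (by positivity)
  -- combine: choose * q^k ≤ δ
  have hcombine : (N.choose (L-1) : ℝ) * q ^ k ≤ δ := by
    have hqknn : (0:ℝ) ≤ q ^ k := pow_nonneg ENNReal.toReal_nonneg k
    calc (N.choose (L-1) : ℝ) * q ^ k ≤ (N:ℝ)^(L-1) * exp (-((k:ℝ)*p)) := by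
          apply mul_le_mul hchoose hqle hqknn (by positivity)
      _ ≤ (N:ℝ)^(L-1) * exp (-(c₃ * (N:ℝ)^γ)) := by
          refine mul_le_mul_of_nonneg_left ?_ (by positivity)
          exact Real.exp_le_exp.2 (by linarith)
      _ = exp (Real.log N * ((L-1:ℕ):ℝ) - c₃ * (N:ℝ)^γ) := by
          rw [sub_eq_add_neg, Real.exp_add]
          congr 1
          rw [← Real.rpow_natCast (N:ℝ) (L-1), Real.rpow_def_of_pos hNpos]
      _ ≤ exp (Real.log δ) := by
          apply Real.exp_le_exp.2
          have hcast : ((L-1:ℕ):ℝ) = (L:ℝ) - 1 := by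
            have : (1:ℕ) ≤ L := hL
            push_cast [Nat.cast_sub this]
            ring
          rw [hcast]
          exact hNdom
      _ = δ := Real.exp_log hδ0
  have hkey := hbound N hLN t ht0
  rw [← hq, ← hk] at hkey
  have hstep2 : u * Real.log N ≤ (L:ℝ) * t * (1 - (N.choose (L-1) : ℝ) * q ^ k) := by
    have h6 : u * Real.log N = (L:ℝ) * t * (u/(L*a)) := by
      rw [hT]
      field_simp
    rw [h6]
    have h7 : u/(L*a) ≤ 1 - (N.choose (L-1) : ℝ) * q ^ k := by
      have : u/(L*a) = 1 - δ := by rw [hδ]; ring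
      rw [this]
      linarith
    refine mul_le_mul_of_nonneg_left h7 ?_
    positivity
  linarith
lemma expectation_nonneg {m : ℝ} {L N : ℕ} {Ω : Type*} [MeasurableSpace Ω] {P : Measure Ω}
    [IsProbabilityMeasure P] {W : Fin N → Ω → ℝ}
    (hm0 : 0 < m) (hLN : L ≤ N) (hW : ∀ n, Measurable (W n))
    (hd : ∀ n, P.map (W n) = gammaMeasure m m) :
    0 ≤ ∫ ω, topSum L (fun n => W n ω) ∂P := by
  refine integral_nonneg_of_ae ?_
  have hae : ∀ᵐ ω ∂P, ∀ n, 0 ≤ W n ω := by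
    rw [ae_all_iff]
    intro n
    exact ae_of_ae_map (hW n).aemeasurable
      (by rw [hd n]; exact gamma_ae_nonneg hm0 : ∀ᵐ x ∂(P.map (W n)), 0 ≤ x)
  filter_upwards [hae] with ω hω
  exact topSum_nonneg hLN hω

end StmtAux

open StmtAux in
theorem stmt3
    (m : ℝ) (hm : 1 / 2 ≤ m)
    (L : ℕ) (hL : 1 ≤ L)
    (Ω : ℕ → Type) [∀ N, MeasurableSpace (Ω N)]
    (P : ∀ N, Measure (Ω N)) [∀ N, IsProbabilityMeasure (P N)]
    (W : ∀ N : ℕ, Fin N → Ω N → ℝ)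
    (hmeas : ∀ N : ℕ, L < N → ∀ n : Fin N, Measurable (W N n))
    (hindep : ∀ N : ℕ, L < N →
      iIndepFun (W N) (P N))
    (hdist : ∀ N : ℕ, L < N → ∀ n : Fin N,
      (P N).map (W N n) = gammaMeasure m m) :
    Tendsto
      (fun N : ℕ =>
        (∫ ω, topSum L (fun n => W N n ω) ∂(P N)) / (((L : ℝ) / m) * Real.log N))
      atTop (nhds 1) := by
  have hm0 : 0 < m := by linarith
  have hL0 : (0:ℝ) < L := by exact_mod_cast hL
  have hLm : (0:ℝ) < (L:ℝ)/m := by positivity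
  set D : ℕ → ℝ := fun N => ∫ ω, topSum L (fun n => W N n ω) ∂(P N) with hDdef
  have hub : ∀ u : ℝ, (L:ℝ)/m < u → ∀ᶠ N : ℕ in atTop, D N ≤ u * Real.log N := by
    intro u hu
    refine eventually_upper hm0 hL ?_ hu
    intro s hs hsm N hLN t
    exact expectation_upper hm0 hL hLN.le (hmeas N hLN) (hdist N hLN) hs hsm t
  have hlb : ∀ u : ℝ, 0 < u → u < (L:ℝ)/m → ∀ᶠ N : ℕ in atTop, u * Real.log N ≤ D N := by
    intro u h0 h1
    refine eventually_lower hm hL ?_ h0 h1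
    intro N hLN t ht
    exact expectation_lower hm0 hL hLN (hmeas N hLN) (hindep N hLN) (hdist N hLN) ht
  have hlogpos : ∀ᶠ N : ℕ in atTop, 0 < Real.log N := (Real.tendsto_log_atTop.comp tendsto_natCast_atTop_atTop).eventually_gt_atTop 0
  rw [tendsto_order]
  constructor
  · intro b hb
    set b' : ℝ := max b 0 with hb'
    have hb'0 : 0 ≤ b' := le_max_right _ _
    have hb'1 : b' < 1 := max_lt hb one_pos
    set u : ℝ := ((L:ℝ)/m) * ((b'+1)/2) with hu
    have hu0 : 0 < u := by rw [hu]; positivity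
    have hu1 : u < (L:ℝ)/m := by
      rw [hu]
      nlinarith [hLm, hb'1]
    filter_upwards [hlb u hu0 hu1, hlogpos] with N h1 h2
    have hden : 0 < ((L:ℝ)/m) * Real.log N := by positivity
    have hval : u * Real.log N / (((L:ℝ)/m) * Real.log N) = (b'+1)/2 := by
      rw [hu]
      field_simp
    have : b < u * Real.log N / (((L:ℝ)/m) * Real.log N) := by
      rw [hval]
      have : b ≤ b' := le_max_left _ _
      linarith
    exact lt_of_lt_of_le this ((div_le_div_iff_of_pos_right hden).2 h1)
  · intro b hb
    set u : ℝ := ((L:ℝ)/m) * ((b+1)/2) with hu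
    have hu1 : (L:ℝ)/m < u := by
      rw [hu]
      nlinarith [hLm, hb]
    filter_upwards [hub u hu1, hlogpos] with N h1 h2
    have hden : 0 < ((L:ℝ)/m) * Real.log N := by positivity
    have hval : u * Real.log N / (((L:ℝ)/m) * Real.log N) = (b+1)/2 := by
      rw [hu]
      field_simp
    have hle : D N / (((L:ℝ)/m) * Real.log N) ≤ (b+1)/2 := by
      rw [← hval]
      exact (div_le_div_iff_of_pos_right hden).2 h1
    have : (b+1)/2 < b := by linarith
    exact lt_of_le_of_lt hle this
end

section
/- Let m > 0 and let L ≥ 1 be a fixed integer. For N > L, let υ_N > 0 be the unique solution of G(m, m υ_N) = (L/N) · Γ(m), and define μ_N := N · G(m+1, m υ_N)/(m Γ(m)), where G(s, x) := ∫_x^∞ t^{s−1} e^{−t} dt and Γ(m) = G(m, 0). Then μ_N/(L υ_N) → 1 as N → ∞; consequently μ_N → ∞ as N → ∞. -/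
open Filter MeasureTheory Set

/-- The (real) upper incomplete gamma function `G(s, x) = ∫ₓ^∞ t^(s-1) e^(-t) dt`. -/
noncomputable def upperGamma (s x : ℝ) : ℝ :=
  ∫ t in Set.Ioi x, t ^ (s - 1) * Real.exp (-t)



lemma ig_meas (s : ℝ) : Measurable (fun t : ℝ => t ^ (s - 1) * Real.exp (-t)) :=
  (measurable_id.pow_const _).mul (Real.measurable_exp.comp measurable_neg)

lemma ig_integrableOn {s : ℝ} (hs : 0 < s) {x : ℝ} (hx : 0 ≤ x) :
    IntegrableOn (fun t : ℝ => t ^ (s - 1) * Real.exp (-t)) (Set.Ioi x) := by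
  have h := (Real.GammaIntegral_convergent hs).mono_set (Set.Ioi_subset_Ioi hx)
  simpa [mul_comm] using h

lemma ig_contAt {s x : ℝ} (hx : 0 < x) :
    ContinuousAt (fun t : ℝ => t ^ (s - 1) * Real.exp (-t)) x :=
  (Real.continuousAt_rpow_const x (s - 1) (Or.inl hx.ne')).mul
    (Real.continuous_exp.continuousAt.comp (continuous_neg.continuousAt))

lemma uG_sub {s : ℝ} (hs : 0 < s) {a b : ℝ} (ha : 0 ≤ a) (hab : a ≤ b) :
    upperGamma s a = (∫ t in Set.Ioc a b, t ^ (s - 1) * Real.exp (-t)) + upperGamma s b := by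
  rw [upperGamma, upperGamma, ← Set.Ioc_union_Ioi_eq_Ioi hab]
  exact setIntegral_union (Set.Ioc_disjoint_Ioi le_rfl) measurableSet_Ioi
    ((ig_integrableOn hs ha).mono_set Set.Ioc_subset_Ioi_self)
    (ig_integrableOn hs (ha.trans hab))

lemma uG_antitoneOn {s : ℝ} (hs : 0 < s) {a b : ℝ} (ha : 0 ≤ a) (hab : a ≤ b) :
    upperGamma s b ≤ upperGamma s a := by
  rw [uG_sub hs ha hab]
  have : 0 ≤ ∫ t in Set.Ioc a b, t ^ (s - 1) * Real.exp (-t) := by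
    apply setIntegral_nonneg measurableSet_Ioc
    intro t ht
    exact mul_nonneg (Real.rpow_nonneg (ha.trans ht.1.le) _) (Real.exp_pos _).le
  linarith

lemma uG_pos {s : ℝ} (hs : 0 < s) {x : ℝ} (hx : 0 ≤ x) : 0 < upperGamma s x := by
  rw [upperGamma, setIntegral_pos_iff_support_of_nonneg_ae]
  · have : (Function.support fun t : ℝ => t ^ (s - 1) * Real.exp (-t)) ∩ Ioi x = Ioi x := by
      rw [Set.inter_eq_right]
      intro t ht
      have ht0 : 0 < t := lt_of_le_of_lt hx ht
      exact mul_ne_zero (Real.rpow_pos_of_pos ht0 _).ne' (Real.exp_pos _).ne'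
    rw [this, Real.volume_Ioi]
    simp
  · refine eventually_of_mem (self_mem_ae_restrict measurableSet_Ioi) ?_
    intro t ht
    exact mul_nonneg (Real.rpow_nonneg (hx.trans (le_of_lt ht)) _) (Real.exp_pos _).le
  · exact ig_integrableOn hs hx

lemma uG_eq_sub_interval {s : ℝ} (hs : 0 < s) {a x : ℝ} (ha : 0 < a) (hx : 0 < x) :
    upperGamma s x = upperGamma s a - ∫ t in a..x, t ^ (s - 1) * Real.exp (-t) := by
  rcases le_total a x with h | h
  · rw [intervalIntegral.integral_of_le h, uG_sub hs ha.le h]; ring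
  · rw [intervalIntegral.integral_of_ge h, uG_sub hs hx.le h]; ring

lemma uG_hasDerivAt {s : ℝ} (hs : 0 < s) {x : ℝ} (hx : 0 < x) :
    HasDerivAt (upperGamma s) (-(x ^ (s - 1) * Real.exp (-x))) x := by
  set f : ℝ → ℝ := fun t => t ^ (s - 1) * Real.exp (-t) with hf
  have hii : IntervalIntegrable f volume (x/2) x := by
    rw [intervalIntegrable_iff]
    refine (ig_integrableOn hs (le_refl 0)).mono_set ?_
    intro t ht
    exact lt_of_le_of_lt (le_min (by linarith) (by linarith)) ht.1
  have hD : HasDerivAt (fun u => ∫ t in (x/2)..u, f t) (f x) x :=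
    intervalIntegral.integral_hasDerivAt_right hii
      ((ig_meas s).stronglyMeasurable.stronglyMeasurableAtFilter) (ig_contAt hx)
  have hD2 : HasDerivAt (fun u => upperGamma s (x/2) - ∫ t in (x/2)..u, f t)
      (-(f x)) x := (hD.const_sub _)
  refine hD2.congr_of_eventuallyEq ?_
  filter_upwards [IsOpen.mem_nhds isOpen_Ioi hx] with y hy
  exact uG_eq_sub_interval hs (by linarith) hy

lemma uG_tendsto_zero {s : ℝ} (hs : 0 < s) :
    Tendsto (fun x => upperGamma s x) atTop (nhds 0) := by
  have h1 : Tendsto (fun x : ℝ => ∫ t in (1:ℝ)..x, t ^ (s - 1) * Real.exp (-t)) atTop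
      (nhds (upperGamma s 1)) :=
    intervalIntegral_tendsto_integral_Ioi 1 (ig_integrableOn hs zero_le_one) tendsto_id
  have h2 : Tendsto (fun x : ℝ => upperGamma s 1 - ∫ t in (1:ℝ)..x, t ^ (s - 1) * Real.exp (-t))
      atTop (nhds (upperGamma s 1 - upperGamma s 1)) := (tendsto_const_nhds.sub h1)
  rw [sub_self] at h2
  refine Tendsto.congr' ?_ h2
  filter_upwards [eventually_gt_atTop (0:ℝ)] with x hx
  exact (uG_eq_sub_interval hs one_pos hx).symm

lemma uG_ratio_tendsto {s : ℝ} (hs : 0 < s) :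
    Tendsto (fun x => upperGamma s x / (x ^ (s - 1) * Real.exp (-x))) atTop (nhds 1) := by
  have hrw : ∀ x : ℝ, 0 < x → x - (s - 1) ≠ 0 →
      x ^ (s - 1) = x ^ (s - 1 - 1) * x := by
    intro x hx _
    rw [← Real.rpow_add_one hx.ne' (s - 1 - 1)]
    ring_nf
  apply HasDerivAt.lhopital_zero_atTop
    (f' := fun x => -(x ^ (s - 1) * Real.exp (-x)))
    (g' := fun x => (s - 1) * x ^ (s - 1 - 1) * Real.exp (-x)
      + x ^ (s - 1) * (Real.exp (-x) * (-1)))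
  · filter_upwards [eventually_gt_atTop (0:ℝ)] with x hx
    exact uG_hasDerivAt hs hx
  · filter_upwards [eventually_gt_atTop (0:ℝ)] with x hx
    have h1 : HasDerivAt (fun t : ℝ => t ^ (s - 1)) ((s - 1) * x ^ (s - 1 - 1)) x :=
      Real.hasDerivAt_rpow_const (Or.inl hx.ne')
    have h2 : HasDerivAt (fun t : ℝ => Real.exp (-t)) (Real.exp (-x) * (-1)) x :=
      (hasDerivAt_neg x).exp
    exact h1.mul h2
  · filter_upwards [eventually_gt_atTop (0:ℝ), eventually_gt_atTop (s - 1)] with x hx hxs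
    have hA : (0:ℝ) < x ^ (s - 1 - 1) := Real.rpow_pos_of_pos hx _
    have hE : (0:ℝ) < Real.exp (-x) := Real.exp_pos _
    have h := hrw x hx (by linarith)
    rw [h]
    have : (s - 1) * x ^ (s - 1 - 1) * Real.exp (-x)
        + x ^ (s - 1 - 1) * x * (Real.exp (-x) * (-1))
        = x ^ (s - 1 - 1) * Real.exp (-x) * ((s - 1) - x) := by ring
    rw [this]
    exact mul_ne_zero (mul_ne_zero hA.ne' hE.ne') (by linarith)
  · exact uG_tendsto_zero hs
  · have h := tendsto_rpow_mul_exp_neg_mul_atTop_nhds_zero (s - 1) 1 one_pos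
    simpa using h
  · have hlim : Tendsto (fun x : ℝ => (1 - (s - 1) / x)⁻¹) atTop (nhds 1) := by
      have h1 : Tendsto (fun x : ℝ => 1 - (s - 1) / x) atTop (nhds (1 - 0)) :=
        tendsto_const_nhds.sub (tendsto_const_nhds.div_atTop tendsto_id)
      rw [sub_zero] at h1
      simpa using h1.inv₀ one_ne_zero
    refine Tendsto.congr' ?_ hlim
    filter_upwards [eventually_gt_atTop (0:ℝ), eventually_gt_atTop (s - 1)] with x hx hxs
    have hA : (0:ℝ) < x ^ (s - 1 - 1) := Real.rpow_pos_of_pos hx _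
    have hE : (0:ℝ) < Real.exp (-x) := Real.exp_pos _
    have h := hrw x hx (by linarith)
    rw [h]
    have hne : x - (s - 1) ≠ 0 := by linarith
    have hlt : (s - 1) / x < 1 := (div_lt_one hx).2 hxs
    have hne2 : 1 - (s - 1) / x ≠ 0 := by linarith
    rw [show (s - 1) * x ^ (s - 1 - 1) * Real.exp (-x)
        + x ^ (s - 1 - 1) * x * (Real.exp (-x) * (-1))
        = x ^ (s - 1 - 1) * Real.exp (-x) * ((s - 1) - x) from by ring]
    have hden : x ^ (s - 1 - 1) * Real.exp (-x) * ((s - 1) - x) ≠ 0 :=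
      mul_ne_zero (mul_ne_zero hA.ne' hE.ne') (by linarith)
    have h2 : (1 - (s - 1) / x) = (x - (s - 1)) / x := by field_simp
    rw [h2, inv_div, div_eq_div_iff hne hden]
    ring

lemma uG_succ {m : ℝ} (hm : 0 < m) {x : ℝ} (hx : 0 < x) :
    upperGamma (m + 1) x = m * upperGamma m x + x ^ m * Real.exp (-x) := by
  have hm1 : (0:ℝ) < m + 1 := by linarith
  have ha := ig_integrableOn hm1 hx.le
  have hb := (ig_integrableOn hm hx.le).const_mul m
  have key : (∫ t in Set.Ioi x,
      (t ^ (m + 1 - 1) * Real.exp (-t) - m * (t ^ (m - 1) * Real.exp (-t))))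
      = 0 - (-(x ^ m * Real.exp (-x))) := by
    apply integral_Ioi_of_hasDerivAt_of_tendsto'
      (f := fun t => -(t ^ m * Real.exp (-t)))
    · intro t ht
      have ht0 : 0 < t := lt_of_lt_of_le hx ht
      have h1 : HasDerivAt (fun t : ℝ => t ^ m) (m * t ^ (m - 1)) t :=
        Real.hasDerivAt_rpow_const (Or.inl ht0.ne')
      have h2 : HasDerivAt (fun t : ℝ => Real.exp (-t)) (Real.exp (-t) * (-1)) t :=
        (hasDerivAt_neg t).exp
      have := (h1.mul h2).neg
      convert this using 1
      · funext u; simp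
      rw [show m + 1 - 1 = m by ring]
      ring
    · exact ha.sub hb
    · have h := (tendsto_rpow_mul_exp_neg_mul_atTop_nhds_zero m 1 one_pos).neg
      simpa using h
  have hsplit : (∫ t in Set.Ioi x,
      (t ^ (m + 1 - 1) * Real.exp (-t) - m * (t ^ (m - 1) * Real.exp (-t))))
      = upperGamma (m + 1) x - m * upperGamma m x := by
    rw [MeasureTheory.integral_sub ha hb, MeasureTheory.integral_const_mul]
    rfl
  rw [hsplit] at key
  linarith

theorem stmt14 (m : ℝ) (hm : 0 < m) (L : ℕ) (hL : 1 ≤ L)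
    (υ μ : ℕ → ℝ)
    (hυ : ∀ N : ℕ, L < N →
      0 < υ N ∧ upperGamma m (m * υ N) = ((L : ℝ) / N) * upperGamma m 0)
    (hμ : ∀ N : ℕ, L < N →
      μ N = N * upperGamma (m + 1) (m * υ N) / (m * upperGamma m 0)) :
    Tendsto (fun N : ℕ => μ N / ((L : ℝ) * υ N)) atTop (nhds 1) ∧
      Tendsto μ atTop atTop := by
  have hΓ : 0 < upperGamma m 0 := uG_pos hm le_rfl
  have hL0 : (0:ℝ) < (L:ℝ) := by exact_mod_cast Nat.lt_of_lt_of_le Nat.zero_lt_one hL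
  -- υ tends to infinity
  have hυtop : Tendsto υ atTop atTop := by
    rw [tendsto_atTop]
    intro b
    set M := max b 1 with hMdef
    have hM0 : (0:ℝ) < M := lt_of_lt_of_le one_pos (le_max_right _ _)
    have hpos : 0 < upperGamma m (m * M) := uG_pos hm (by positivity)
    have h0 : Tendsto (fun N : ℕ => ((L : ℝ) / N) * upperGamma m 0) atTop (nhds 0) := by
      have h1 : Tendsto (fun N : ℕ => (L : ℝ) / N) atTop (nhds 0) :=
        Tendsto.div_atTop tendsto_const_nhds tendsto_natCast_atTop_atTop
      simpa using h1.mul_const (upperGamma m 0)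
    filter_upwards [h0.eventually_lt_const hpos, eventually_gt_atTop L] with N h1 h2
    obtain ⟨hυN, heq⟩ := hυ N h2
    have hlt : upperGamma m (m * υ N) < upperGamma m (m * M) := heq ▸ h1
    by_contra hb
    push_neg at hb
    have hυM : υ N ≤ M := le_trans hb.le (le_max_left _ _)
    have : upperGamma m (m * M) ≤ upperGamma m (m * υ N) :=
      uG_antitoneOn hm (by positivity) (by nlinarith)
    linarith
  have hxtop : Tendsto (fun N : ℕ => m * υ N) atTop atTop :=
    Tendsto.const_mul_atTop hm hυtop
  -- key eventual identity
  have hkey : ∀ᶠ N : ℕ in atTop, μ N / ((L : ℝ) * υ N)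
      = (υ N)⁻¹ + ((m * υ N) ^ (m - 1) * Real.exp (-(m * υ N))) / upperGamma m (m * υ N) := by
    filter_upwards [eventually_gt_atTop L] with N hN
    obtain ⟨hυN, heq⟩ := hυ N hN
    have hN0 : (0:ℝ) < (N:ℝ) := by exact_mod_cast Nat.lt_of_le_of_lt (Nat.zero_le L) hN
    have hx : 0 < m * υ N := by positivity
    have hG : 0 < upperGamma m (m * υ N) := uG_pos hm hx.le
    have hNval : (N : ℝ) = (L : ℝ) * upperGamma m 0 / upperGamma m (m * υ N) := by
      rw [heq]; field_simp
    have hxm : (m * υ N) ^ m = (m * υ N) ^ (m - 1) * (m * υ N) := by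
      rw [← Real.rpow_add_one hx.ne' (m - 1)]; ring_nf
    rw [hμ N hN, uG_succ hm hx, hxm, hNval]
    field_simp
  have T2 : Tendsto (fun N : ℕ =>
      ((m * υ N) ^ (m - 1) * Real.exp (-(m * υ N))) / upperGamma m (m * υ N)) atTop (nhds 1) := by
    have h := ((uG_ratio_tendsto hm).comp hxtop).inv₀ one_ne_zero
    simp only [inv_one] at h
    refine Tendsto.congr' ?_ h
    filter_upwards [hυtop.eventually (eventually_gt_atTop 0)] with N hN
    simp [Function.comp, inv_div]
  have T1 : Tendsto (fun N : ℕ => μ N / ((L : ℝ) * υ N)) atTop (nhds 1) := by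
    have h := (hυtop.inv_tendsto_atTop).add T2
    rw [zero_add] at h
    exact Tendsto.congr' (hkey.mono fun N h' => h'.symm) h
  refine ⟨T1, ?_⟩
  have hLυ : Tendsto (fun N : ℕ => (L : ℝ) * υ N) atTop atTop :=
    Tendsto.const_mul_atTop hL0 hυtop
  have h := T1.pos_mul_atTop one_pos hLυ
  refine Tendsto.congr' ?_ h
  filter_upwards [hυtop.eventually (eventually_gt_atTop 0)] with N hN
  have : (L : ℝ) * υ N ≠ 0 := by positivity
  field_simp
end
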